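/- arXiv:2401.06736 — 4 statements merged into one kernel-verified Lean document; each statement's English description precedes it below -/
import Mathlib

section
/- Let Θ(z,σ) = (Φ(z)^{2(α+1)} + 4(α+1)²Ψ(σ)²)^{1/(2(α+1))} be the anisotropic Minkowski gauge on ℝ^N = ℝ^m × ℝ^k, and define the anisotropic Legendre transformation Θ⁰ by Θ⁰(z,σ)^{α+1} = sup{ |⟨z,ξ⟩|^{α+1} + 4(α+1)²⟨σ,τ⟩ : (ξ,τ) ∈ ℝ^N, Θ(ξ,τ) = 1 }. Then for every (z,σ) ∈ ℝ^N one has Θ⁰(z,σ) = (Φ⁰(z)^{2(α+1)} + 4(α+1)²Ψ⁰(σ)²)^{1/(2(α+1))}. -/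
open Real MeasureTheory
open scoped RealInnerProductSpace

noncomputable section

abbrev Euc (n : ℕ) := EuclideanSpace ℝ (Fin n)

/-- A Minkowski norm on `ℝⁿ`: nonnegative, absolutely homogeneous, with `N²` of class `C²`
away from the origin and strictly convex. -/
def IsMinkowskiNorm {n : ℕ} (N : Euc n → ℝ) : Prop :=
  (∀ x, 0 ≤ N x) ∧ (∀ (l : ℝ) (x : Euc n), N (l • x) = |l| * N x) ∧
  ContDiffOn ℝ 2 (fun x => (N x) ^ 2) {(0 : Euc n)}ᶜ ∧
  StrictConvexOn ℝ Set.univ (fun x => (N x) ^ 2)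

/-- The Legendre transform (dual norm) `N⁰(x) = sup { ⟨x,ξ⟩ : N(ξ) = 1 }`. -/
def dualNorm {n : ℕ} (N : Euc n → ℝ) (x : Euc n) : ℝ :=
  sSup ((fun ξ => ⟪x, ξ⟫) '' {ξ | N ξ = 1})

variable {m k : ℕ}

/-- The dual anisotropic Minkowski gauge
`ρ(z,σ) = (Φ⁰(z)^{2(α+1)} + 4(α+1)²Ψ⁰(σ)²)^{1/(2(α+1))}`. -/
def rho (α : ℝ) (Φ : Euc m → ℝ) (Ψ : Euc k → ℝ) (x : Euc m × Euc k) : ℝ :=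
  (dualNorm Φ x.1 ^ (2 * (α + 1)) + 4 * (α + 1) ^ 2 * dualNorm Ψ x.2 ^ 2) ^ (1 / (2 * (α + 1)))

/-- Gradient in the `z` variables. -/
def gradZ (u : Euc m × Euc k → ℝ) (x : Euc m × Euc k) : Euc m :=
  gradient (fun z => u (z, x.2)) x.1

/-- Gradient in the `σ` variables. -/
def gradS (u : Euc m × Euc k → ℝ) (x : Euc m × Euc k) : Euc k :=
  gradient (fun σ => u (x.1, σ)) x.2

/-- Divergence in the `z` variables. -/
def divZ (V : Euc m × Euc k → Euc m) (x : Euc m × Euc k) : ℝ :=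
  ∑ i, fderiv ℝ (fun z => V (z, x.2) i) x.1 (EuclideanSpace.single i 1)

/-- Divergence in the `σ` variables. -/
def divS (V : Euc m × Euc k → Euc k) (x : Euc m × Euc k) : ℝ :=
  ∑ i, fderiv ℝ (fun σ => V (x.1, σ) i) x.2 (EuclideanSpace.single i 1)

/-- The Finsler Laplacian in the `z` variables, `Δ_Φ(u) = div_z(Φ(∇_z u) ∇Φ(∇_z u))`. -/
def finslerLapZ (Φ : Euc m → ℝ) (u : Euc m × Euc k → ℝ) (x : Euc m × Euc k) : ℝ :=
  divZ (fun y => Φ (gradZ u y) • gradient Φ (gradZ u y)) x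

/-- The Finsler Laplacian in the `σ` variables, `Δ_Ψ(u) = div_σ(Ψ(∇_σ u) ∇Ψ(∇_σ u))`. -/
def finslerLapS (Ψ : Euc k → ℝ) (u : Euc m × Euc k → ℝ) (x : Euc m × Euc k) : ℝ :=
  divS (fun y => Ψ (gradS u y) • gradient Ψ (gradS u y)) x

/-- The operator `𝓛_{α,p}`. -/
def Lop (α p : ℝ) (Φ : Euc m → ℝ) (Ψ : Euc k → ℝ) (u : Euc m × Euc k → ℝ)
    (x : Euc m × Euc k) : ℝ :=
  divZ (fun y =>
      (Φ (gradZ u y) ^ 2 + dualNorm Φ y.1 ^ (2 * α) / 4 * Ψ (gradS u y) ^ 2) ^ ((p - 2) / 2) •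
        (Φ (gradZ u y) • gradient Φ (gradZ u y))) x
  + divS (fun y =>
      (Φ (gradZ u y) ^ 2 + dualNorm Φ y.1 ^ (2 * α) / 4 * Ψ (gradS u y) ^ 2) ^ ((p - 2) / 2) •
        ((dualNorm Φ y.1 ^ (2 * α) / 4 * Ψ (gradS u y)) • gradient Ψ (gradS u y))) x

/-- The operator `𝓛_{α,2}(u) = Δ_Φ(u) + (Φ⁰(z)^{2α}/4) Δ_Ψ(u)`. -/
def Lop2 (α : ℝ) (Φ : Euc m → ℝ) (Ψ : Euc k → ℝ) (u : Euc m × Euc k → ℝ)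
    (x : Euc m × Euc k) : ℝ :=
  finslerLapZ Φ u x + dualNorm Φ x.1 ^ (2 * α) / 4 * finslerLapS Ψ u x

section MinkHelpers

variable {n : ℕ} {N : Euc n → ℝ}

lemma mink_zero (h : IsMinkowskiNorm N) : N 0 = 0 := by
  have := h.2.1 0 0
  simpa using this

lemma mink_pos (h : IsMinkowskiNorm N) {x : Euc n} (hx : x ≠ 0) : 0 < N x := by
  rcases (h.1 x).lt_or_eq with hp | hp
  · exact hp
  exfalso
  have hxx : x ≠ -x := by
    intro he
    apply hx
    have h2 : (2:ℝ) • x = 0 := by rw [two_smul]; nth_rewrite 2 [he]; exact add_neg_cancel x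
    have := smul_eq_zero.mp h2
    simpa using this
  have hNx : N x = 0 := hp.symm
  have hNnx : N (-x) = 0 := by
    have := h.2.1 (-1) x
    simpa [hNx] using this
  have := h.2.2.2.2 (Set.mem_univ x) (Set.mem_univ (-x)) hxx
    (by norm_num : (0:ℝ) < 1/2) (by norm_num : (0:ℝ) < 1/2) (by norm_num)
  rw [show (1/2 : ℝ) • x + (1/2 : ℝ) • (-x) = 0 by module] at this
  simp [mink_zero h, hNx, hNnx] at this

lemma mink_contOn (h : IsMinkowskiNorm N) : ContinuousOn N {(0:Euc n)}ᶜ := by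
  have h2 : ContinuousOn (fun x => (N x)^2) {(0:Euc n)}ᶜ := h.2.2.1.continuousOn
  have h3 : ContinuousOn (fun x => Real.sqrt ((N x)^2)) {(0:Euc n)}ᶜ :=
    Real.continuous_sqrt.comp_continuousOn h2
  refine h3.congr ?_
  intro x _
  exact (Real.sqrt_sq (h.1 x)).symm

lemma mink_bounds (h : IsMinkowskiNorm N) (hn : 1 ≤ n) :
    ∃ c C : ℝ, 0 < c ∧ ∀ x : Euc n, c * ‖x‖ ≤ N x ∧ N x ≤ C * ‖x‖ := by
  have hsph : IsCompact (Metric.sphere (0:Euc n) 1) := isCompact_sphere 0 1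
  haveI : Nontrivial (Euc n) := by
    refine ⟨EuclideanSpace.single (⟨0, hn⟩ : Fin n) (1:ℝ), 0, fun he => ?_⟩
    have := congrArg (fun v : Euc n => v ⟨0, hn⟩) he
    simp [EuclideanSpace.single_apply] at this
  have hne : (Metric.sphere (0:Euc n) 1).Nonempty := NormedSpace.sphere_nonempty.mpr zero_le_one
  have hsub : Metric.sphere (0:Euc n) 1 ⊆ {(0:Euc n)}ᶜ := by
    intro y hy hy0
    simp only [Set.mem_singleton_iff] at hy0
    rw [hy0] at hy
    simp at hy
  have hcont : ContinuousOn N (Metric.sphere (0:Euc n) 1) := (mink_contOn h).mono hsub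
  obtain ⟨p, hp, hpmin⟩ := hsph.exists_isMinOn hne hcont
  obtain ⟨q, hq, hqmax⟩ := hsph.exists_isMaxOn hne hcont
  have hp0 : p ≠ 0 := fun he => by simp [he] at hp
  refine ⟨N p, N q, mink_pos h hp0, fun x => ?_⟩
  rcases eq_or_ne x 0 with rfl | hx
  · simp [mink_zero h]
  · have hxn : ‖x‖ ≠ 0 := norm_ne_zero_iff.mpr hx
    have hxpos : (0:ℝ) < ‖x‖ := norm_pos_iff.mpr hx
    set u : Euc n := ‖x‖⁻¹ • x with hu
    have hus : u ∈ Metric.sphere (0:Euc n) 1 := by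
      simp [hu, norm_smul, abs_of_pos (inv_pos.mpr hxpos), inv_mul_cancel₀ hxn]
    have hNx : N x = ‖x‖ * N u := by
      have := h.2.1 ‖x‖⁻¹ x
      rw [← hu] at this
      have h2 : N u = ‖x‖⁻¹ * N x := by rwa [abs_of_pos (inv_pos.mpr hxpos)] at this
      rw [h2, ← mul_assoc, mul_inv_cancel₀ hxn, one_mul]
    constructor
    · have h5 : N p ≤ N u := hpmin hus
      rw [hNx]
      nlinarith
    · have h5 : N u ≤ N q := hqmax hus
      rw [hNx]
      nlinarith

lemma mink_continuous (h : IsMinkowskiNorm N) (hn : 1 ≤ n) : Continuous N := by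
  obtain ⟨c, C, hc, hb⟩ := mink_bounds h hn
  rw [continuous_iff_continuousAt]
  intro x
  rcases eq_or_ne x 0 with rfl | hx
  · rw [ContinuousAt, mink_zero h]
    have : Filter.Tendsto (fun y : Euc n => C * ‖y‖) (nhds 0) (nhds 0) := by
      have hcm : Continuous (fun y : Euc n => C * ‖y‖) := continuous_const.mul continuous_norm
      have := hcm.tendsto (0 : Euc n)
      simpa using this
    exact squeeze_zero (fun t => h.1 t) (fun t => (hb t).2) this
  · exact (mink_contOn h).continuousAt (compl_singleton_mem_nhds hx)

lemma mink_unit_compact (h : IsMinkowskiNorm N) (hn : 1 ≤ n) :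
    IsCompact {ξ : Euc n | N ξ = 1} := by
  obtain ⟨c, C, hc, hb⟩ := mink_bounds h hn
  apply Metric.isCompact_of_isClosed_isBounded
  · exact isClosed_eq (mink_continuous h hn) continuous_const
  · apply (Metric.isBounded_closedBall (x := (0:Euc n)) (r := c⁻¹)).subset
    intro ξ hξ
    simp only [Set.mem_setOf_eq] at hξ
    have := (hb ξ).1
    rw [hξ] at this
    simp only [Metric.mem_closedBall, dist_zero_right]
    rw [inv_eq_one_div, le_div_iff₀ hc]
    nlinarith

lemma mink_unit_nonempty (h : IsMinkowskiNorm N) (hn : 1 ≤ n) :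
    {ξ : Euc n | N ξ = 1}.Nonempty := by
  have hx0 : (EuclideanSpace.single (⟨0, hn⟩ : Fin n) (1:ℝ)) ≠ 0 := by
    intro he
    have := congrArg (fun v : Euc n => v ⟨0, hn⟩) he
    simp [EuclideanSpace.single_apply] at this
  set x0 := EuclideanSpace.single (⟨0, hn⟩ : Fin n) (1:ℝ)
  have hpos := mink_pos h hx0
  refine ⟨(N x0)⁻¹ • x0, ?_⟩
  simp only [Set.mem_setOf_eq]
  rw [h.2.1, abs_of_pos (inv_pos.mpr hpos), inv_mul_cancel₀ hpos.ne']

lemma dual_max (h : IsMinkowskiNorm N) (hn : 1 ≤ n) (z : Euc n) :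
    ∃ a : Euc n, N a = 1 ∧ dualNorm N z = ⟪z, a⟫ ∧ ∀ ξ : Euc n, N ξ = 1 → ⟪z, ξ⟫ ≤ ⟪z, a⟫ := by
  have hcpt := mink_unit_compact h hn
  have hne := mink_unit_nonempty h hn
  have hcont : ContinuousOn (fun ξ : Euc n => ⟪z, ξ⟫) {ξ : Euc n | N ξ = 1} :=
    (continuous_const.inner continuous_id).continuousOn
  obtain ⟨a, ha, hmax⟩ := hcpt.exists_isMaxOn hne hcont
  refine ⟨a, ha, ?_, fun ξ hξ => hmax hξ⟩
  apply IsGreatest.csSup_eq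
  constructor
  · exact Set.mem_image_of_mem _ ha
  · rintro r ⟨ξ, hξ, rfl⟩
    exact hmax hξ

lemma dual_nonneg (h : IsMinkowskiNorm N) (hn : 1 ≤ n) (z : Euc n) : 0 ≤ dualNorm N z := by
  obtain ⟨a, ha, heq, hmax⟩ := dual_max h hn z
  have hna : N (-a) = 1 := by
    have := h.2.1 (-1) a
    simpa [ha] using this
  have := hmax (-a) hna
  rw [inner_neg_right] at this
  rw [heq]; linarith

lemma dual_abs_le (h : IsMinkowskiNorm N) (hn : 1 ≤ n) (z ξ : Euc n) :
    |⟪z, ξ⟫| ≤ dualNorm N z * N ξ := by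
  obtain ⟨a, ha, heq, hmax⟩ := dual_max h hn z
  have key : ∀ η : Euc n, ⟪z, η⟫ ≤ dualNorm N z * N η := by
    intro η
    rcases eq_or_ne η 0 with rfl | hη
    · simp [mink_zero h]
    · have hp := mink_pos h hη
      have h1 : N ((N η)⁻¹ • η) = 1 := by
        rw [h.2.1, abs_of_pos (inv_pos.mpr hp), inv_mul_cancel₀ hp.ne']
      have := hmax _ h1
      rw [real_inner_smul_right] at this
      rw [heq]
      calc ⟪z, η⟫ = N η * ((N η)⁻¹ * ⟪z, η⟫) := by field_simp
        _ ≤ N η * ⟪z, a⟫ := by nlinarith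
        _ = ⟪z, a⟫ * N η := mul_comm _ _
  rw [abs_le]
  constructor
  · have := key (-ξ)
    have hnξ : N (-ξ) = N ξ := by have := h.2.1 (-1) ξ; simpa using this
    rw [inner_neg_right, hnξ] at this
    linarith
  · exact key ξ



end MinkHelpers

set_option maxHeartbeats 1000000 in
/-- The anisotropic Legendre transform `Θ⁰` of the anisotropic Minkowski gauge
`Θ(z,σ) = (Φ(z)^{2(α+1)} + 4(α+1)²Ψ(σ)²)^{1/(2(α+1))}`, defined by
`Θ⁰(z,σ)^{α+1} = sup { |⟨z,ξ⟩|^{α+1} + 4(α+1)²⟨σ,τ⟩ : Θ(ξ,τ) = 1 }`, coincides with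
`(Φ⁰(z)^{2(α+1)} + 4(α+1)²Ψ⁰(σ)²)^{1/(2(α+1))}`. -/
theorem anisotropic_legendre_formula (m k : ℕ) (hm : 1 ≤ m) (hk : 1 ≤ k)
    (α : ℝ) (hα : 0 < α)
    (Φ : Euc m → ℝ) (Ψ : Euc k → ℝ)
    (hΦ : IsMinkowskiNorm Φ) (hΨ : IsMinkowskiNorm Ψ)
    (Θ : Euc m × Euc k → ℝ)
    (hΘ : ∀ x : Euc m × Euc k,
      Θ x = (Φ x.1 ^ (2 * (α + 1)) + 4 * (α + 1) ^ 2 * Ψ x.2 ^ 2) ^ (1 / (2 * (α + 1))))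
    (Θ0 : Euc m × Euc k → ℝ)
    (hΘ0nonneg : ∀ x, 0 ≤ Θ0 x)
    (hΘ0 : ∀ x : Euc m × Euc k,
      Θ0 x ^ (α + 1) = sSup {r : ℝ | ∃ ξ : Euc m, ∃ τ : Euc k, Θ (ξ, τ) = 1 ∧
        r = |⟪x.1, ξ⟫| ^ (α + 1) + 4 * (α + 1) ^ 2 * ⟪x.2, τ⟫}) :
    ∀ x : Euc m × Euc k,
      Θ0 x = (dualNorm Φ x.1 ^ (2 * (α + 1)) +
        4 * (α + 1) ^ 2 * dualNorm Ψ x.2 ^ 2) ^ (1 / (2 * (α + 1))) := by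
  intro x
  obtain ⟨a, ha1, haeq, hamax⟩ := dual_max hΦ hm x.1
  obtain ⟨b, hb1, hbeq, hbmax⟩ := dual_max hΨ hk x.2
  set β := α + 1 with hβ
  have hβ0 : (0:ℝ) < β := by rw [hβ]; linarith
  have h2β0 : (2*β) ≠ 0 := by positivity
  set A := dualNorm Φ x.1 with hA
  set B := dualNorm Ψ x.2 with hB
  have hA0 : 0 ≤ A := by rw [hA]; exact dual_nonneg hΦ hm x.1
  have hB0 : 0 ≤ B := by rw [hB]; exact dual_nonneg hΨ hk x.2
  set X := A ^ (2*β) + 4*β^2*B^2 with hX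
  have hArp : 0 ≤ A ^ (2*β) := Real.rpow_nonneg hA0 _
  have hX0 : 0 ≤ X := by rw [hX]; positivity
  set R := Real.sqrt X with hR
  have hR2 : R^2 = X := Real.sq_sqrt hX0
  have hR0 : 0 ≤ R := Real.sqrt_nonneg X
  have hAβ2 : (A ^ β)^2 = A ^ (2*β) := by
    rw [← Real.rpow_natCast (A^β) 2, ← Real.rpow_mul hA0]
    norm_num [mul_comm]
  have hgreat : IsGreatest {r : ℝ | ∃ ξ : Euc m, ∃ τ : Euc k, Θ (ξ, τ) = 1 ∧
      r = |⟪x.1, ξ⟫| ^ β + 4 * β ^ 2 * ⟪x.2, τ⟫} R := by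
    constructor
    · -- membership: the sup is attained
      rcases hX0.lt_or_eq with hXpos | hXz
      · -- X > 0
        have hRpos : 0 < R := Real.sqrt_pos.mpr hXpos
        set s := A ^ β / R with hs
        have hs0 : 0 ≤ s := by
          rw [hs]
          exact div_nonneg (Real.rpow_nonneg hA0 _) hR0
        set c := s ^ β⁻¹ with hc
        have hc0 : 0 ≤ c := Real.rpow_nonneg hs0 _
        have hcβ : c ^ β = s := by
          rw [hc, ← Real.rpow_mul hs0, inv_mul_cancel₀ hβ0.ne', Real.rpow_one]
        have hcpow : c ^ (2*β) = s^2 := by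
          rw [hc, ← Real.rpow_mul hs0, show β⁻¹ * (2*β) = (2:ℝ) by field_simp,
            ← Real.rpow_natCast s 2]
          norm_num
        refine ⟨c • a, (B / R) • b, ?_, ?_⟩
        · rw [hΘ]
          dsimp only
          have hΦξ : Φ (c • a) = c := by rw [hΦ.2.1, ha1, abs_of_nonneg hc0, mul_one]
          have hΨτ : Ψ ((B/R) • b) = B / R := by
            rw [hΨ.2.1, hb1, abs_of_nonneg (div_nonneg hB0 hR0), mul_one]
          rw [hΦξ, hΨτ, hcpow]
          have hsum : s^2 + 4*β^2*(B/R)^2 = 1 := by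
            have h1 : s^2 = A^(2*β)/X := by rw [hs, div_pow, hAβ2, hR2]
            have h2 : (B/R)^2 = B^2 / X := by rw [div_pow, hR2]
            rw [h1, h2, ← mul_div_assoc, ← add_div, ← hX, div_self hXpos.ne']
          rw [hsum, Real.one_rpow]
        · rw [real_inner_smul_right, real_inner_smul_right, ← haeq, ← hbeq]
          rw [abs_of_nonneg (mul_nonneg hc0 hA0), Real.mul_rpow hc0 hA0, hcβ]
          have e1 : s * A ^ β = (A^β)^2 / R := by rw [hs, sq]; ring
          have e2 : 4*β^2*(B/R*B) = 4*β^2*B^2 / R := by rw [sq]; ring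
          rw [e1, e2, ← add_div, hAβ2, ← hX, ← hR2, sq, mul_div_assoc,
            div_self hRpos.ne', mul_one]
      · -- X = 0, hence A = 0, B = 0, R = 0
        have hXz' : X = 0 := hXz.symm
        rw [hX] at hXz'
        have h4 : B^2 ≤ 0 := by nlinarith [pow_pos hβ0 2]
        have hBz : B = 0 := pow_eq_zero_iff two_ne_zero |>.mp (le_antisymm h4 (sq_nonneg B))
        rw [hBz] at hXz'
        have hA2 : A ^ (2*β) = 0 := by
          have : (0:ℝ)^2 = 0 := by norm_num
          nlinarith
        have hAz : A = 0 := (Real.rpow_eq_zero hA0 h2β0).mp hA2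
        have hRz : R = 0 := by rw [hR, ← hXz, Real.sqrt_zero]
        refine ⟨a, 0, ?_, ?_⟩
        · rw [hΘ]
          dsimp only
          rw [ha1, mink_zero hΨ]
          norm_num
        · rw [inner_zero_right, ← haeq, hAz, hRz, abs_zero,
            Real.zero_rpow hβ0.ne']
          norm_num
    · -- upper bound
      rintro r ⟨ξ, τ, hcon, rfl⟩
      rw [hΘ (ξ, τ)] at hcon
      dsimp only at hcon
      have hΦξ0 : 0 ≤ Φ ξ := hΦ.1 ξ
      have hΨτ0 : 0 ≤ Ψ τ := hΨ.1 τ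
      set s := Φ ξ ^ β with hs
      set t := 2*β*Ψ τ with ht
      have hs0 : 0 ≤ s := Real.rpow_nonneg hΦξ0 _
      have ht0 : 0 ≤ t := by rw [ht]; positivity
      have hsq : Φ ξ ^ (2*β) = s^2 := by
        rw [hs, ← Real.rpow_natCast (Φ ξ ^ β) 2, ← Real.rpow_mul hΦξ0]
        norm_num [mul_comm]
      have hY0 : (0:ℝ) ≤ Φ ξ ^ (2*β) + 4*β^2*Ψ τ^2 := by
        have := Real.rpow_nonneg hΦξ0 (2*β); positivity
      have hone : s^2 + t^2 = 1 := by
        have h2 := congrArg (fun y : ℝ => y ^ (2*β)) hcon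
        simp only [Real.one_rpow] at h2
        rw [← Real.rpow_mul hY0, one_div, inv_mul_cancel₀ h2β0, Real.rpow_one] at h2
        rw [← hsq]
        have htsq : t^2 = 4*β^2*Ψ τ^2 := by rw [ht]; ring
        rw [htsq]
        exact h2
      have hzb : |⟪x.1, ξ⟫| ≤ A * Φ ξ := by
        have h5 := dual_abs_le hΦ hm x.1 ξ
        rwa [← hA] at h5
      have hsb : ⟪x.2, τ⟫ ≤ B * Ψ τ := by
        have h5 := dual_abs_le hΨ hk x.2 τ
        rw [← hB] at h5
        exact (le_abs_self _).trans h5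
      have h1 : |⟪x.1, ξ⟫| ^ β ≤ A ^ β * s := by
        calc |⟪x.1, ξ⟫| ^ β ≤ (A * Φ ξ) ^ β := Real.rpow_le_rpow (abs_nonneg _) hzb hβ0.le
          _ = A ^ β * s := by rw [Real.mul_rpow hA0 hΦξ0, hs]
      have h2' : 4*β^2*⟪x.2, τ⟫ ≤ 2*β*B*t := by
        calc 4*β^2*⟪x.2, τ⟫ ≤ 4*β^2*(B*Ψ τ) :=
              mul_le_mul_of_nonneg_left hsb (by positivity)
          _ = 2*β*B*t := by rw [ht]; ring
      have hfin : A ^ β * s + 2*β*B*t ≤ R := by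
        have hlhs0 : 0 ≤ A^β*s + 2*β*B*t :=
          add_nonneg (mul_nonneg (Real.rpow_nonneg hA0 β) hs0)
            (mul_nonneg (mul_nonneg (by linarith : (0:ℝ) ≤ 2*β) hB0) ht0)
        rw [hR, Real.le_sqrt hlhs0 hX0, hX]
        have key : (A^β*s + 2*β*B*t)^2 ≤ ((A^β)^2 + (2*β*B)^2) * (s^2 + t^2) := by
          nlinarith [sq_nonneg (A^β*t - 2*β*B*s)]
        calc (A^β*s + 2*β*B*t)^2 ≤ ((A^β)^2 + (2*β*B)^2) * (s^2 + t^2) := key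
          _ = (A^β)^2 + (2*β*B)^2 := by rw [hone, mul_one]
          _ = A ^ (2*β) + 4*β^2*B^2 := by rw [← hAβ2]; ring
      linarith [h1, h2', hfin]
  have hsup : Θ0 x ^ β = R := by
    rw [hΘ0 x]
    exact hgreat.csSup_eq
  have hfin2 : Θ0 x = R ^ β⁻¹ := by
    have h3 := congrArg (fun y : ℝ => y ^ β⁻¹) hsup
    rwa [← Real.rpow_mul (hΘ0nonneg x), mul_inv_cancel₀ hβ0.ne', Real.rpow_one] at h3
  rw [hfin2, hR, Real.sqrt_eq_rpow, ← Real.rpow_mul hX0,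
    show (1/2:ℝ) * β⁻¹ = 1/(2*β) by field_simp]
end
end

section
/- For every (z,σ) ∈ ℝ^N ∖ {(0,0)} with z ≠ 0 one has Φ(∇_z ρ(z,σ)) = Φ⁰(z)^{2α+1} ρ(z,σ)^{-2α-1}, and for every (z,σ) ∈ ℝ^N ∖ {(0,0)} with σ ≠ 0 one has Ψ(∇_σ ρ(z,σ)) = 4(α+1) Ψ⁰(σ) ρ(z,σ)^{-2α-1}. -/
open Real MeasureTheory
open scoped RealInnerProductSpace

noncomputable section

variable {n : ℕ} {N : Euc n → ℝ}

lemma mn_zero (hN : IsMinkowskiNorm N) : N 0 = 0 := by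
  have := hN.2.1 0 0
  simpa using this

lemma mn_smul_nonneg (hN : IsMinkowskiNorm N) {c : ℝ} (hc : 0 ≤ c) (x : Euc n) :
    N (c • x) = c * N x := by
  rw [hN.2.1, abs_of_nonneg hc]

lemma mn_pos (hN : IsMinkowskiNorm N) {x : Euc n} (hx : x ≠ 0) : 0 < N x := by
  rcases (hN.1 x).lt_or_eq with h | h
  · exact h
  exfalso
  have hnx : N (-x) = 0 := by
    have := hN.2.1 (-1) x; simp at this; rw [this, ← h]
  have hne : x ≠ -x := by
    intro hxx
    apply hx
    have h2 : (2:ℝ) • x = 0 := by rw [two_smul]; nth_rewrite 2 [hxx]; simp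
    simpa using h2
  have hs := hN.2.2.2.2 (Set.mem_univ x) (Set.mem_univ (-x)) hne
    (by norm_num : (0:ℝ) < 1/2) (by norm_num : (0:ℝ) < 1/2) (by norm_num)
  simp only [← h, hnx] at hs
  rw [show (1/2 : ℝ) • x + (1/2 : ℝ) • (-x) = 0 by module, mn_zero hN] at hs
  norm_num at hs

lemma mn_continuousAt (hN : IsMinkowskiNorm N) {x : Euc n} (hx : x ≠ 0) :
    ContinuousAt N x := by
  have h1 : ContinuousOn (fun x => (N x) ^ 2) {(0 : Euc n)}ᶜ := hN.2.2.1.continuousOn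
  have h2 : ContinuousOn N {(0 : Euc n)}ᶜ := by
    have : N = fun x => Real.sqrt ((N x) ^ 2) := by
      funext y; rw [Real.sqrt_sq (hN.1 y)]
    rw [this]
    exact h1.sqrt
  exact h2.continuousAt (isOpen_compl_singleton.mem_nhds hx)

lemma mn_bounds (hN : IsMinkowskiNorm N) (hex : ∃ v : Euc n, v ≠ 0) :
    ∃ c C : ℝ, 0 < c ∧ 0 < C ∧ ∀ x, c * ‖x‖ ≤ N x ∧ N x ≤ C * ‖x‖ := by
  obtain ⟨v, hv⟩ := hex
  have hsph : IsCompact (Metric.sphere (0 : Euc n) 1) := isCompact_sphere 0 1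
  have hne : (Metric.sphere (0 : Euc n) 1).Nonempty := by
    refine ⟨‖v‖⁻¹ • v, ?_⟩
    simp [norm_smul, abs_of_nonneg (inv_nonneg.mpr (norm_nonneg v)),
      inv_mul_cancel₀ (norm_ne_zero_iff.mpr hv)]
  have hzero : ∀ x ∈ Metric.sphere (0 : Euc n) 1, x ≠ 0 := by
    intro x hx h0
    rw [Metric.mem_sphere, dist_zero_right, h0] at hx
    simp at hx
  have hcont : ContinuousOn N (Metric.sphere (0 : Euc n) 1) :=
    fun x hx => (mn_continuousAt hN (hzero x hx)).continuousWithinAt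
  obtain ⟨u, huS, humin⟩ := hsph.exists_isMinOn hne hcont
  obtain ⟨w, hwS, hwmax⟩ := hsph.exists_isMaxOn hne hcont
  refine ⟨N u, N w, mn_pos hN (hzero u huS), mn_pos hN (hzero w hwS), fun x => ?_⟩
  rcases eq_or_ne x 0 with rfl | hx
  · simp [mn_zero hN]
  · have hxS : ‖x‖⁻¹ • x ∈ Metric.sphere (0 : Euc n) 1 := by
      simp [norm_smul, abs_of_nonneg (inv_nonneg.mpr (norm_nonneg x)),
        inv_mul_cancel₀ (norm_ne_zero_iff.mpr hx)]
    have hxval : N x = ‖x‖ * N (‖x‖⁻¹ • x) := by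
      rw [← mn_smul_nonneg hN (norm_nonneg x), smul_inv_smul₀ (norm_ne_zero_iff.mpr hx)]
    constructor
    · rw [hxval, mul_comm (N u)]
      exact mul_le_mul_of_nonneg_left (humin hxS) (norm_nonneg x)
    · rw [hxval, mul_comm (N w)]
      exact mul_le_mul_of_nonneg_left (hwmax hxS) (norm_nonneg x)

lemma mn_sphere_compact (hN : IsMinkowskiNorm N) (hex : ∃ v : Euc n, v ≠ 0) :
    IsCompact {ξ : Euc n | N ξ = 1} := by
  obtain ⟨c, C, hc, hC, hbd⟩ := mn_bounds hN hex
  set K := Metric.closedBall (0 : Euc n) c⁻¹ \ Metric.ball (0 : Euc n) (C⁻¹ / 2) with hKdef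
  have hKne : ∀ x ∈ K, x ≠ 0 := by
    intro x hx h0
    have h2 := hx.2
    rw [h0] at h2
    exact h2 (by simp [Metric.mem_ball]; positivity)
  have hKcpt : IsCompact K := (isCompact_closedBall _ _).diff Metric.isOpen_ball
  have hKcl : IsClosed K := Metric.isClosed_closedBall.sdiff Metric.isOpen_ball
  have hsub : {ξ : Euc n | N ξ = 1} ⊆ K := by
    intro ξ hξ
    have h1 := (hbd ξ).1
    have h2 := (hbd ξ).2
    rw [Set.mem_setOf_eq] at hξ
    constructor
    · rw [Metric.mem_closedBall, dist_zero_right]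
      rw [hξ] at h1
      calc ‖ξ‖ = c⁻¹ * (c * ‖ξ‖) := by field_simp
        _ ≤ c⁻¹ * 1 := by apply mul_le_mul_of_nonneg_left h1 (by positivity)
        _ = c⁻¹ := by ring
    · rw [Metric.mem_ball, dist_zero_right]
      push_neg
      rw [hξ] at h2
      have : C⁻¹ ≤ ‖ξ‖ := by
        rw [inv_le_iff_one_le_mul₀ hC]
        linarith
      linarith [this, inv_pos.mpr hC]
  have hScl : IsClosed ({ξ : Euc n | N ξ = 1}) := by
    have hcont : ContinuousOn N K := fun x hx => (mn_continuousAt hN (hKne x hx)).continuousWithinAt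
    have heq : {ξ : Euc n | N ξ = 1} = K ∩ N ⁻¹' {1} := by
      ext ξ
      constructor
      · intro h; exact ⟨hsub h, h⟩
      · intro h; exact h.2
    rw [heq]
    exact hcont.preimage_isClosed_of_isClosed hKcl isClosed_singleton
  exact hKcpt.of_isClosed_subset hScl hsub

lemma exists_dual_max (hN : IsMinkowskiNorm N) (hex : ∃ v : Euc n, v ≠ 0) (w : Euc n) :
    ∃ ξ, N ξ = 1 ∧ ⟪w, ξ⟫ = dualNorm N w ∧ ∀ η, N η = 1 → ⟪w, η⟫ ≤ ⟪w, ξ⟫ := by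
  have hSne : ({ξ : Euc n | N ξ = 1}).Nonempty := by
    obtain ⟨v, hv⟩ := hex
    refine ⟨(N v)⁻¹ • v, ?_⟩
    rw [Set.mem_setOf_eq, mn_smul_nonneg hN (inv_nonneg.mpr (mn_pos hN hv).le),
      inv_mul_cancel₀ (mn_pos hN hv).ne']
  have hcont : Continuous fun ξ : Euc n => ⟪w, ξ⟫ := continuous_const.inner continuous_id
  obtain ⟨ξ, hξS, hmax⟩ := (mn_sphere_compact hN hex).exists_isMaxOn hSne hcont.continuousOn
  have hval : dualNorm N w = ⟪w, ξ⟫ := by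
    unfold dualNorm
    apply IsGreatest.csSup_eq
    constructor
    · exact ⟨ξ, hξS, rfl⟩
    · rintro _ ⟨η, hη, rfl⟩
      exact hmax hη
  exact ⟨ξ, hξS, hval.symm, fun η hη => hmax hη⟩

lemma dual_ub (hN : IsMinkowskiNorm N) (hex : ∃ v : Euc n, v ≠ 0) (w : Euc n)
    {η : Euc n} (hη : N η = 1) : ⟪w, η⟫ ≤ dualNorm N w := by
  obtain ⟨ξ, _, hval, hmax⟩ := exists_dual_max hN hex w
  rw [← hval]
  exact hmax η hη

lemma dual_nonneg_s3 (hN : IsMinkowskiNorm N) (hex : ∃ v : Euc n, v ≠ 0) (w : Euc n) :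
    0 ≤ dualNorm N w := by
  obtain ⟨ξ, hξS, hval, hmax⟩ := exists_dual_max hN hex w
  have h1 : ⟪w, ξ⟫ ≤ dualNorm N w := hval.le
  have hnξ : N (-ξ) = 1 := by
    have := hN.2.1 (-1) ξ
    simp at this
    rw [this, hξS]
  have h2 : ⟪w, -ξ⟫ ≤ dualNorm N w := dual_ub hN hex w hnξ
  rw [inner_neg_right] at h2
  linarith

lemma dual_pos (hN : IsMinkowskiNorm N) {z : Euc n} (hz : z ≠ 0) :
    0 < dualNorm N z := by
  have hNz := mn_pos hN hz
  have hη : N ((N z)⁻¹ • z) = 1 := by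
    rw [mn_smul_nonneg hN (inv_nonneg.mpr hNz.le), inv_mul_cancel₀ hNz.ne']
  have := dual_ub hN ⟨z, hz⟩ z hη
  rw [real_inner_smul_right, real_inner_self_eq_norm_sq] at this
  have hpos : 0 < (N z)⁻¹ * ‖z‖ ^ 2 := mul_pos (inv_pos.mpr hNz) (pow_pos (norm_pos_iff.mpr hz) 2)
  linarith

lemma dual_max_unique (hN : IsMinkowskiNorm N) (hex : ∃ v : Euc n, v ≠ 0) {z : Euc n}
    (hz : z ≠ 0) {ξ₁ ξ₂ : Euc n} (h₁ : N ξ₁ = 1) (hv₁ : ⟪z, ξ₁⟫ = dualNorm N z)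
    (h₂ : N ξ₂ = 1) (hv₂ : ⟪z, ξ₂⟫ = dualNorm N z) : ξ₁ = ξ₂ := by
  by_contra hne
  set w := (1/2 : ℝ) • ξ₁ + (1/2 : ℝ) • ξ₂ with hw
  have hDz := dual_pos hN hz
  have hwin : ⟪z, w⟫ = dualNorm N z := by
    rw [hw, inner_add_right, real_inner_smul_right, real_inner_smul_right, hv₁, hv₂]
    ring
  have hw0 : w ≠ 0 := by
    intro h0
    rw [h0, inner_zero_right] at hwin
    linarith
  have hsc := hN.2.2.2.2 (Set.mem_univ ξ₁) (Set.mem_univ ξ₂) hne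
    (by norm_num : (0:ℝ) < 1/2) (by norm_num : (0:ℝ) < 1/2) (by norm_num)
  simp only [h₁, h₂, smul_eq_mul] at hsc
  have hwlt : N w ^ 2 < 1 := by
    rw [hw]; refine lt_of_lt_of_eq hsc ?_; norm_num
  have hNw : 0 < N w := mn_pos hN hw0
  have hNwlt : N w < 1 := by nlinarith
  have hη : N ((N w)⁻¹ • w) = 1 := by
    rw [mn_smul_nonneg hN (inv_nonneg.mpr hNw.le), inv_mul_cancel₀ hNw.ne']
  have hub := dual_ub hN hex z hη
  rw [real_inner_smul_right, hwin] at hub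
  have : dualNorm N z < (N w)⁻¹ * dualNorm N z := by
    rw [lt_mul_iff_one_lt_left hDz]
    exact (one_lt_inv₀ hNw).mpr hNwlt
  linarith

lemma dual_max_shrink (hN : IsMinkowskiNorm N) (hex : ∃ v : Euc n, v ≠ 0) {z : Euc n}
    (hz : z ≠ 0) {ξ : Euc n} (hξ : N ξ = 1) (hval : ⟪z, ξ⟫ = dualNorm N z) {ε : ℝ}
    (hε : 0 < ε) :
    ∃ t > 0, ∀ η, N η = 1 → dualNorm N z - t ≤ ⟪z, η⟫ → ‖η - ξ‖ < ε := by
  by_contra hcon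
  push_neg at hcon
  set K : ℕ → Set (Euc n) :=
    fun m => {η | N η = 1 ∧ dualNorm N z - 1/(m+1) ≤ ⟪z, η⟫ ∧ ε ≤ ‖η - ξ‖} with hK
  have hnested : ∀ m, K (m+1) ⊆ K m := by
    intro m η hη
    have h21 := hη.2.1
    push_cast at h21 ⊢
    have hle : (1:ℝ)/((m:ℝ)+1+1) ≤ 1/((m:ℝ)+1) := by
      apply one_div_le_one_div_of_le
      · positivity
      · linarith
    exact ⟨hη.1, by linarith, hη.2.2⟩
  have hnonempty : ∀ m, (K m).Nonempty := by
    intro m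
    obtain ⟨η, h1, h2, h3⟩ := hcon (1/(m+1)) (by positivity)
    exact ⟨η, h1, h2, h3⟩
  have hclosed : ∀ m, IsClosed (K m) := by
    intro m
    have h1 : IsClosed {η : Euc n | N η = 1} := (mn_sphere_compact hN hex).isClosed
    have h2 : IsClosed {η : Euc n | dualNorm N z - 1/(m+1) ≤ ⟪z, η⟫} :=
      isClosed_le continuous_const (continuous_const.inner continuous_id)
    have h3 : IsClosed {η : Euc n | ε ≤ ‖η - ξ‖} :=
      isClosed_le continuous_const ((continuous_id.sub continuous_const).norm)
    have heq : K m = ({η : Euc n | N η = 1} ∩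
        {η : Euc n | dualNorm N z - 1/(m+1) ≤ ⟪z, η⟫}) ∩ {η : Euc n | ε ≤ ‖η - ξ‖} := by
      ext η
      simp only [hK, Set.mem_setOf_eq, Set.mem_inter_iff, and_assoc]
    rw [heq]
    exact (h1.inter h2).inter h3
  have hcpt : IsCompact (K 0) :=
    (mn_sphere_compact hN hex).of_isClosed_subset (hclosed 0) (fun η h => h.1)
  obtain ⟨η₀, hη₀⟩ := IsCompact.nonempty_iInter_of_sequence_nonempty_isCompact_isClosed
    K hnested hnonempty hcpt hclosed
  rw [Set.mem_iInter] at hη₀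
  have h1 : N η₀ = 1 := (hη₀ 0).1
  have h3 : ε ≤ ‖η₀ - ξ‖ := (hη₀ 0).2.2
  have h2 : ∀ m : ℕ, dualNorm N z - 1/(m+1) ≤ ⟪z, η₀⟫ := fun m => (hη₀ m).2.1
  have hmaxv : ⟪z, η₀⟫ = dualNorm N z := by
    refine le_antisymm (dual_ub hN hex z h1) ?_
    by_contra hlt
    push_neg at hlt
    obtain ⟨m, hm⟩ := exists_nat_one_div_lt (sub_pos.mpr hlt)
    have := h2 m
    linarith
  have := dual_max_unique hN hex hz hξ hval h1 hmaxv
  rw [this, sub_self, norm_zero] at h3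
  linarith

lemma dual_hasGradientAt (hN : IsMinkowskiNorm N) {z : Euc n} (hz : z ≠ 0) :
    ∃ ξ, N ξ = 1 ∧ ⟪z, ξ⟫ = dualNorm N z ∧ HasGradientAt (dualNorm N) ξ z := by
  have hex : ∃ v : Euc n, v ≠ 0 := ⟨z, hz⟩
  obtain ⟨c, C, hc, hC, hbd⟩ := mn_bounds hN hex
  set R := c⁻¹ with hR
  have hRpos : 0 < R := inv_pos.mpr hc
  have hbd1 : ∀ η : Euc n, N η = 1 → ‖η‖ ≤ R := by
    intro η hη
    have h1 := (hbd η).1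
    rw [hη] at h1
    calc ‖η‖ = c⁻¹ * (c * ‖η‖) := by field_simp
      _ ≤ c⁻¹ * 1 := mul_le_mul_of_nonneg_left h1 (by positivity)
      _ = R := by rw [hR, mul_one]
  obtain ⟨ξ, hξ, hval, hmax⟩ := exists_dual_max hN hex z
  refine ⟨ξ, hξ, hval, ?_⟩
  rw [hasGradientAt_iff_hasFDerivAt, hasFDerivAt_iff_isLittleO_nhds_zero,
    Asymptotics.isLittleO_iff]
  intro ε hε
  obtain ⟨t, ht, hshrink⟩ := dual_max_shrink hN hex hz hξ hval hε
  have hδ : 0 < t / (2 * R) := by positivity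
  have hev : ∀ᶠ h : Euc n in nhds 0, ‖h‖ < t / (2 * R) := by
    filter_upwards [Metric.ball_mem_nhds (0 : Euc n) hδ] with h hh
    simpa [dist_zero_right] using hh
  filter_upwards [hev] with h hh
  obtain ⟨ζ, hζ, hζval, hζmax⟩ := exists_dual_max hN hex (z + h)
  have a6 : |⟪h, ξ⟫| ≤ ‖h‖ * R :=
    le_trans (abs_real_inner_le_norm h ξ) (mul_le_mul_of_nonneg_left (hbd1 ξ hξ) (norm_nonneg h))
  have a7 : |⟪h, ζ⟫| ≤ ‖h‖ * R :=
    le_trans (abs_real_inner_le_norm h ζ) (mul_le_mul_of_nonneg_left (hbd1 ζ hζ) (norm_nonneg h))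
  have f1 : ⟪z + h, ξ⟫ ≤ dualNorm N (z + h) := dual_ub hN hex (z + h) hξ
  have f2 : ⟪z + h, ξ⟫ = dualNorm N z + ⟪h, ξ⟫ := by
    rw [inner_add_left, hval]
  have f3 : dualNorm N (z + h) = ⟪z, ζ⟫ + ⟪h, ζ⟫ := by
    rw [← hζval, inner_add_left]
  have f4 : ⟪z, ζ⟫ ≤ dualNorm N z := dual_ub hN hex z hζ
  have hRh : 2 * R * ‖h‖ < t := by
    have := (lt_div_iff₀ (by positivity : (0:ℝ) < 2 * R)).mp hh
    linarith
  have f5 : dualNorm N z - t ≤ ⟪z, ζ⟫ := by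
    have habs6 := abs_le.mp a6
    have habs7 := abs_le.mp a7
    nlinarith
  have hnear : ‖ζ - ξ‖ < ε := hshrink ζ hζ f5
  have a8 : ⟪h, ζ⟫ - ⟪h, ξ⟫ ≤ ‖h‖ * ε := by
    rw [← inner_sub_right]
    calc ⟪h, ζ - ξ⟫ ≤ ‖h‖ * ‖ζ - ξ‖ := real_inner_le_norm h (ζ - ξ)
      _ ≤ ‖h‖ * ε := mul_le_mul_of_nonneg_left hnear.le (norm_nonneg h)
  rw [InnerProductSpace.toDual_apply_apply, Real.norm_eq_abs, abs_le]
  constructor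
  · have : 0 ≤ dualNorm N (z + h) - dualNorm N z - ⟪ξ, h⟫ := by
      rw [real_inner_comm]
      linarith
    nlinarith [mul_nonneg hε.le (norm_nonneg h)]
  · rw [real_inner_comm]
    have : dualNorm N (z + h) - dualNorm N z - ⟪h, ξ⟫ ≤ ‖h‖ * ε := by linarith
    linarith [this, mul_comm ‖h‖ ε]

lemma toDual_smul_real {n : ℕ} (c : ℝ) (ξ : Euc n) :
    InnerProductSpace.toDual ℝ (Euc n) (c • ξ) =
      c • InnerProductSpace.toDual ℝ (Euc n) ξ := by
  ext y
  simp [InnerProductSpace.toDual_apply_apply, real_inner_smul_left]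


variable {m k : ℕ}

/-- `Φ(∇_z ρ) = Φ⁰(z)^{2α+1} ρ^{-2α-1}` (for `z ≠ 0`) and
`Ψ(∇_σ ρ) = 4(α+1) Ψ⁰(σ) ρ^{-2α-1}` (for `σ ≠ 0`). -/
theorem norm_of_gradient_formulas (m k : ℕ) (hm : 1 ≤ m) (hk : 1 ≤ k) (α : ℝ) (hα : 0 < α)
    (Φ : Euc m → ℝ) (Ψ : Euc k → ℝ) (hΦ : IsMinkowskiNorm Φ) (hΨ : IsMinkowskiNorm Ψ) :
    (∀ x : Euc m × Euc k, x ≠ 0 → x.1 ≠ 0 →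
      Φ (gradZ (rho α Φ Ψ) x) = dualNorm Φ x.1 ^ (2 * α + 1) * rho α Φ Ψ x ^ (-(2 * α) - 1)) ∧
    (∀ x : Euc m × Euc k, x ≠ 0 → x.2 ≠ 0 →
      Ψ (gradS (rho α Φ Ψ) x) = 4 * (α + 1) * dualNorm Ψ x.2 * rho α Φ Ψ x ^ (-(2 * α) - 1)) := by
  have hexm : ∃ v : Euc m, v ≠ 0 := by
    refine ⟨EuclideanSpace.single ⟨0, hm⟩ 1, fun h => ?_⟩
    have := congrArg norm h
    simp at this
  have hexk : ∃ v : Euc k, v ≠ 0 := by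
    refine ⟨EuclideanSpace.single ⟨0, hk⟩ 1, fun h => ?_⟩
    have := congrArg norm h
    simp at this
  have hp : (0:ℝ) < 2 * (α + 1) := by linarith
  have hexp1 : 2 * (α + 1) - 1 = 2 * α + 1 := by ring
  have hexp2 : 1 / (2 * (α + 1)) - 1 = 1 / (2 * (α + 1)) * (-(2 * α) - 1) := by
    field_simp
    ring
  constructor
  · rintro ⟨z, σ⟩ hx hz
    simp only at hz ⊢
    obtain ⟨ξ, hξ, hval, hgrad⟩ := dual_hasGradientAt hΦ hz
    set a := dualNorm Φ z with ha
    have hapos : 0 < a := dual_pos hΦ hz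
    set Cσ := 4 * (α + 1) ^ 2 * dualNorm Ψ σ ^ 2 with hCs
    have hCnn : 0 ≤ Cσ := by positivity
    set G := a ^ (2 * (α + 1)) + Cσ with hGdef
    have hGpos : 0 < G := add_pos_of_pos_of_nonneg (Real.rpow_pos_of_pos hapos _) hCnn
    have h1 : HasFDerivAt (dualNorm Φ) (InnerProductSpace.toDual ℝ (Euc m) ξ) z :=
      hasGradientAt_iff_hasFDerivAt.mp hgrad
    have h2 : HasDerivAt (fun t : ℝ => t ^ (2 * (α + 1)))
        (2 * (α + 1) * a ^ (2 * (α + 1) - 1)) a :=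
      Real.hasDerivAt_rpow_const (Or.inl hapos.ne')
    have h3 := h2.comp_hasFDerivAt z h1
    have h4 := h3.add_const Cσ
    have h5 : HasDerivAt (fun t : ℝ => t ^ (1 / (2 * (α + 1))))
        (1 / (2 * (α + 1)) * G ^ (1 / (2 * (α + 1)) - 1)) G :=
      Real.hasDerivAt_rpow_const (Or.inl hGpos.ne')
    have h6 := h5.comp_hasFDerivAt z h4
    set ccoef := 1 / (2 * (α + 1)) * G ^ (1 / (2 * (α + 1)) - 1) *
      (2 * (α + 1) * a ^ (2 * (α + 1) - 1)) with hcc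
    have hcpos : 0 < ccoef :=
      mul_pos (mul_pos (by positivity) (Real.rpow_pos_of_pos hGpos _))
        (mul_pos hp (Real.rpow_pos_of_pos hapos _))
    have h7 : HasGradientAt (fun w : Euc m => rho α Φ Ψ (w, σ)) (ccoef • ξ) z := by
      rw [hasGradientAt_iff_hasFDerivAt, toDual_smul_real]
      have : (fun w : Euc m => rho α Φ Ψ (w, σ)) =
          (fun t : ℝ => t ^ (1 / (2 * (α + 1)))) ∘
            (fun w : Euc m => dualNorm Φ w ^ (2 * (α + 1)) + Cσ) := by
        funext w
        simp [rho, hCs]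
      rw [this, hcc]
      rw [mul_smul]
      exact h6
    have hgradZ : gradZ (rho α Φ Ψ) (z, σ) = ccoef • ξ := h7.gradient
    rw [hgradZ, hΦ.2.1, abs_of_pos hcpos, hξ, mul_one]
    have hrho : rho α Φ Ψ (z, σ) = G ^ (1 / (2 * (α + 1))) := by
      simp [rho, hGdef, hCs, ha]
    rw [hrho, hcc, ← Real.rpow_mul hGpos.le, hexp1, ← hexp2]
    field_simp
  · rintro ⟨z, σ⟩ hx hσ
    simp only at hσ ⊢
    obtain ⟨η, hη, hval, hgrad⟩ := dual_hasGradientAt hΨ hσ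
    set b := dualNorm Ψ σ with hb
    have hbpos : 0 < b := dual_pos hΨ hσ
    set Cz := dualNorm Φ z ^ (2 * (α + 1)) with hCz
    have hCnn : 0 ≤ Cz := Real.rpow_nonneg (dual_nonneg_s3 hΦ hexm z) _
    set G := Cz + 4 * (α + 1) ^ 2 * b ^ 2 with hGdef
    have hGpos : 0 < G := add_pos_of_nonneg_of_pos hCnn (by positivity)
    have h1 : HasFDerivAt (dualNorm Ψ) (InnerProductSpace.toDual ℝ (Euc k) η) σ :=
      hasGradientAt_iff_hasFDerivAt.mp hgrad
    have h2 : HasDerivAt (fun t : ℝ => t ^ (2 : ℕ)) ((2 : ℕ) * b ^ (1 : ℕ)) b := by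
      simpa using hasDerivAt_pow 2 b
    have h3 := h2.comp_hasFDerivAt σ h1
    have h4 := h3.const_mul (4 * (α + 1) ^ 2)
    have h5 := h4.const_add Cz
    have h6 : HasDerivAt (fun t : ℝ => t ^ (1 / (2 * (α + 1))))
        (1 / (2 * (α + 1)) * G ^ (1 / (2 * (α + 1)) - 1)) G :=
      Real.hasDerivAt_rpow_const (Or.inl hGpos.ne')
    have h7 := h6.comp_hasFDerivAt σ h5
    set ccoef := 1 / (2 * (α + 1)) * G ^ (1 / (2 * (α + 1)) - 1) *
      (4 * (α + 1) ^ 2 * ((2 : ℕ) * b ^ (1 : ℕ))) with hcc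
    have hcpos : 0 < ccoef := by
      apply mul_pos (mul_pos (by positivity) (Real.rpow_pos_of_pos hGpos _))
      positivity
    have h8 : HasGradientAt (fun σ' : Euc k => rho α Φ Ψ (z, σ')) (ccoef • η) σ := by
      rw [hasGradientAt_iff_hasFDerivAt, toDual_smul_real]
      have : (fun σ' : Euc k => rho α Φ Ψ (z, σ')) =
          (fun t : ℝ => t ^ (1 / (2 * (α + 1)))) ∘
            (fun σ' : Euc k => Cz + 4 * (α + 1) ^ 2 * dualNorm Ψ σ' ^ 2) := by
        funext σ'
        simp [rho, hCz]
      rw [this, hcc]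
      rw [mul_smul (1 / (2 * (α + 1)) * G ^ (1 / (2 * (α + 1)) - 1)), mul_smul (4 * (α + 1) ^ 2)]
      exact h7
    have hgradS : gradS (rho α Φ Ψ) (z, σ) = ccoef • η := h8.gradient
    rw [hgradS, hΨ.2.1, abs_of_pos hcpos, hη, mul_one]
    have hrho : rho α Φ Ψ (z, σ) = G ^ (1 / (2 * (α + 1))) := by
      simp [rho, hGdef, hCz, hb]
    rw [hrho, hcc, ← Real.rpow_mul hGpos.le, ← hexp2]
    field_simp
    ring
end
end

section
/- For every (z,σ) ∈ ℝ^N ∖ {(0,0)} with z ≠ 0, the Finsler Laplacian in the z-variables of ρ satisfies Δ_Φ(ρ)(z,σ) = (m+2α) Φ⁰(z)^{2α} ρ(z,σ)^{-2α-1} − (2α+1) Φ⁰(z)^{4α+2} ρ(z,σ)^{-4α-3}. -/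
open Real MeasureTheory
open scoped RealInnerProductSpace

noncomputable section

variable {m k : ℕ}

namespace MN
variable {n : ℕ} {N : Euc n → ℝ}

lemma nonneg (h : IsMinkowskiNorm N) (x : Euc n) : 0 ≤ N x := h.1 x

lemma homog (h : IsMinkowskiNorm N) (l : ℝ) (x : Euc n) : N (l • x) = |l| * N x := h.2.1 l x

lemma zero (h : IsMinkowskiNorm N) : N 0 = 0 := by
  have := h.2.1 0 0; simpa using this

lemma pos (h : IsMinkowskiNorm N) {x : Euc n} (hx : x ≠ 0) : 0 < N x := by
  rcases (h.1 x).lt_or_eq with hlt | heq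
  · exact hlt
  exfalso
  have hsc := h.2.2.2.2 (Set.mem_univ x) (Set.mem_univ (0 : Euc n)) hx
    (by norm_num : (0:ℝ) < 1/2) (by norm_num : (0:ℝ) < 1/2) (by norm_num)
  have h0 : N (0 : Euc n) = 0 := by have := h.2.1 0 0; simpa using this
  have hh : N ((1/2 : ℝ) • x) = |(1/2 : ℝ)| * N x := h.2.1 _ x
  simp only [smul_zero, add_zero, smul_eq_mul] at hsc
  rw [hh, ← heq, h0] at hsc
  norm_num at hsc

/-- N is continuous away from the origin. -/
lemma continuousOn (h : IsMinkowskiNorm N) : ContinuousOn N {(0 : Euc n)}ᶜ := by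
  have hsq : ContinuousOn (fun x => (N x) ^ 2) {(0 : Euc n)}ᶜ := h.2.2.1.continuousOn
  have : ContinuousOn (fun x => Real.sqrt ((N x) ^ 2)) {(0 : Euc n)}ᶜ :=
    Real.continuous_sqrt.comp_continuousOn hsq
  refine this.congr fun x _ => ?_
  exact (Real.sqrt_sq (h.1 x)).symm

/-- Upper bound: `N x ≤ M * ‖x‖` for some `M > 0`. -/
lemma exists_upper (h : IsMinkowskiNorm N) (hn : 1 ≤ n) :
    ∃ M : ℝ, 0 < M ∧ ∀ x : Euc n, N x ≤ M * ‖x‖ := by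
  haveI : Nonempty (Fin n) := ⟨⟨0, hn⟩⟩
  have hsph : (Metric.sphere (0 : Euc n) 1).Nonempty := NormedSpace.sphere_nonempty.2 zero_le_one
  have hcpt : IsCompact (Metric.sphere (0 : Euc n) 1) := isCompact_sphere 0 1
  have hsub : Metric.sphere (0 : Euc n) 1 ⊆ {(0 : Euc n)}ᶜ := by
    intro x hx hx0
    simp only [Set.mem_singleton_iff] at hx0
    rw [mem_sphere_zero_iff_norm] at hx
    rw [hx0] at hx; simp at hx
  obtain ⟨u, hu, hmax⟩ := hcpt.exists_isMaxOn hsph ((continuousOn h).mono hsub)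
  refine ⟨N u + 1, by have := h.1 u; linarith, fun x => ?_⟩
  rcases eq_or_ne x 0 with rfl | hx
  · simp [zero h]
  · have hxn : ‖x‖ ≠ 0 := norm_ne_zero_iff.2 hx
    have h1 : N (‖x‖ • (‖x‖⁻¹ • x)) = |‖x‖| * N (‖x‖⁻¹ • x) := homog h _ _
    rw [smul_smul, mul_inv_cancel₀ hxn, one_smul] at h1
    have hmem : (‖x‖⁻¹ • x) ∈ Metric.sphere (0 : Euc n) 1 := by
      rw [mem_sphere_zero_iff_norm]
      exact norm_smul_inv_norm hx
    have : N (‖x‖⁻¹ • x) ≤ N u := hmax hmem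
    rw [h1, abs_of_nonneg (norm_nonneg x)]
    calc ‖x‖ * N (‖x‖⁻¹ • x) ≤ ‖x‖ * N u := by
          exact mul_le_mul_of_nonneg_left this (norm_nonneg x)
      _ ≤ (N u + 1) * ‖x‖ := by nlinarith [norm_nonneg x]

/-- Lower bound: `c * ‖x‖ ≤ N x` for some `c > 0`. -/
lemma exists_lower (h : IsMinkowskiNorm N) (hn : 1 ≤ n) :
    ∃ c : ℝ, 0 < c ∧ ∀ x : Euc n, c * ‖x‖ ≤ N x := by
  haveI : Nonempty (Fin n) := ⟨⟨0, hn⟩⟩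
  have hsph : (Metric.sphere (0 : Euc n) 1).Nonempty := NormedSpace.sphere_nonempty.2 zero_le_one
  have hcpt : IsCompact (Metric.sphere (0 : Euc n) 1) := isCompact_sphere 0 1
  have hsub : Metric.sphere (0 : Euc n) 1 ⊆ {(0 : Euc n)}ᶜ := by
    intro x hx hx0
    simp only [Set.mem_singleton_iff] at hx0
    rw [mem_sphere_zero_iff_norm] at hx
    rw [hx0] at hx; simp at hx
  obtain ⟨u, hu, hmin⟩ := hcpt.exists_isMinOn hsph ((continuousOn h).mono hsub)
  have hu0 : u ≠ 0 := fun h0 => by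
    rw [mem_sphere_zero_iff_norm, h0] at hu; simp at hu
  refine ⟨N u, pos h hu0, fun x => ?_⟩
  rcases eq_or_ne x 0 with rfl | hx
  · simp [zero h]
  · have hxn : ‖x‖ ≠ 0 := norm_ne_zero_iff.2 hx
    have h1 : N (‖x‖ • (‖x‖⁻¹ • x)) = |‖x‖| * N (‖x‖⁻¹ • x) := homog h _ _
    rw [smul_smul, mul_inv_cancel₀ hxn, one_smul] at h1
    have hmem : (‖x‖⁻¹ • x) ∈ Metric.sphere (0 : Euc n) 1 := by
      rw [mem_sphere_zero_iff_norm]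
      exact norm_smul_inv_norm hx
    have : N u ≤ N (‖x‖⁻¹ • x) := hmin hmem
    rw [h1, abs_of_nonneg (norm_nonneg x)]
    calc N u * ‖x‖ ≤ N (‖x‖⁻¹ • x) * ‖x‖ := by
          exact mul_le_mul_of_nonneg_right this (norm_nonneg x)
      _ = ‖x‖ * N (‖x‖⁻¹ • x) := mul_comm _ _

lemma continuous (h : IsMinkowskiNorm N) (hn : 1 ≤ n) : Continuous N := by
  obtain ⟨M, hM, hMb⟩ := exists_upper h hn
  rw [continuous_iff_continuousAt]
  intro x
  rcases eq_or_ne x 0 with rfl | hx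
  · unfold ContinuousAt
    rw [zero h]
    have hb : Filter.Tendsto (fun x : Euc n => M * ‖x‖) (nhds 0) (nhds 0) := by
      have : Filter.Tendsto (fun x : Euc n => ‖x‖) (nhds 0) (nhds 0) := by
        simpa using (continuous_norm (E := Euc n)).tendsto 0
      simpa using this.const_mul M
    exact squeeze_zero (fun t => h.1 t) (fun t => hMb t) hb
  · exact (continuousOn h).continuousAt (isOpen_compl_singleton.mem_nhds hx)

/-- The unit sphere of N is compact. -/
lemma sphere_isCompact (h : IsMinkowskiNorm N) (hn : 1 ≤ n) :
    IsCompact {ξ : Euc n | N ξ = 1} := by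
  obtain ⟨c, hc, hcb⟩ := exists_lower h hn
  have hclosed : IsClosed {ξ : Euc n | N ξ = 1} :=
    isClosed_eq (continuous h hn) continuous_const
  have hbdd : Bornology.IsBounded {ξ : Euc n | N ξ = 1} := by
    apply Bornology.IsBounded.subset (Metric.isBounded_closedBall (x := (0:Euc n)) (r := c⁻¹))
    intro ξ hξ
    simp only [Set.mem_setOf_eq] at hξ
    rw [Metric.mem_closedBall, dist_zero_right]
    have := hcb ξ
    rw [hξ] at this
    rw [← le_div_iff₀' hc] at this
    simpa [one_div] using this
  exact Metric.isCompact_of_isClosed_isBounded hclosed hbdd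

lemma sphere_nonempty (h : IsMinkowskiNorm N) (hn : 1 ≤ n) :
    {ξ : Euc n | N ξ = 1}.Nonempty := by
  haveI : Nonempty (Fin n) := ⟨⟨0, hn⟩⟩
  have hx : (EuclideanSpace.single (⟨0, hn⟩ : Fin n) (1:ℝ) : Euc n) ≠ 0 := by
    intro h0
    have := congrArg (fun v : Euc n => v ⟨0, hn⟩) h0
    simp at this
  set v : Euc n := EuclideanSpace.single (⟨0, hn⟩ : Fin n) (1:ℝ) with hv
  refine ⟨(N v)⁻¹ • v, ?_⟩
  have hpos := pos h hx
  simp only [Set.mem_setOf_eq]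
  rw [homog h, abs_of_pos (inv_pos.2 hpos), inv_mul_cancel₀ (ne_of_gt hpos)]

/-- N has a strict Fréchet derivative at every nonzero point. -/
lemma hasStrictFDerivAt (h : IsMinkowskiNorm N) {x : Euc n} (hx : x ≠ 0) :
    HasStrictFDerivAt N (fderiv ℝ N x) x := by
  have hsq : ContDiffAt ℝ 2 (fun y => (N y) ^ 2) x :=
    h.2.2.1.contDiffAt (isOpen_compl_singleton.mem_nhds hx)
  have hq : HasStrictFDerivAt (fun y => (N y) ^ 2) (fderiv ℝ (fun y => (N y) ^ 2) x) x :=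
    hsq.hasStrictFDerivAt two_ne_zero
  have hpos : (0:ℝ) < (N x) ^ 2 := pow_pos (pos h hx) 2
  have hsqrt := (Real.hasStrictDerivAt_sqrt (ne_of_gt hpos)).comp_hasStrictFDerivAt x hq
  have heq : ((fun t => Real.sqrt t) ∘ fun y => (N y) ^ 2) = N := by
    funext y; exact Real.sqrt_sq (h.1 y)
  rw [heq] at hsqrt
  have := hsqrt.hasFDerivAt.fderiv
  rw [← this] at hsqrt
  exact hsqrt

lemma differentiableAt (h : IsMinkowskiNorm N) {x : Euc n} (hx : x ≠ 0) :
    DifferentiableAt ℝ N x :=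
  (hasStrictFDerivAt h hx).differentiableAt

/-- Euler identity: the derivative of N at x applied to x equals N x. -/
lemma euler (h : IsMinkowskiNorm N) {x : Euc n} (hx : x ≠ 0) :
    fderiv ℝ N x x = N x := by
  have hd : HasDerivAt (fun t : ℝ => t • x) ((1:ℝ) • x) 1 := (hasDerivAt_id 1).smul_const x
  rw [one_smul] at hd
  have hcomp : HasDerivAt (fun t : ℝ => N (t • x)) (fderiv ℝ N x x) 1 := by
    have hfd : HasFDerivAt N (fderiv ℝ N x) ((1:ℝ) • x) := by
      rw [one_smul]; exact (differentiableAt h hx).hasFDerivAt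
    have := hfd.comp_hasDerivAt 1 hd
    simpa [Function.comp_def] using this
  have hev : (fun t : ℝ => N (t • x)) =ᶠ[nhds (1:ℝ)] (fun t : ℝ => t * N x) := by
    filter_upwards [eventually_gt_nhds (by norm_num : (0:ℝ) < 1)] with t ht
    rw [homog h, abs_of_pos ht]
  have hcomp' : HasDerivAt (fun t : ℝ => t * N x) (fderiv ℝ N x x) 1 :=
    hcomp.congr_of_eventuallyEq hev.symm
  have hlin : HasDerivAt (fun t : ℝ => t * N x) (N x) 1 := by
    simpa using (hasDerivAt_id (1:ℝ)).mul_const (N x)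
  exact hcomp'.unique hlin

/-- The derivative of a 1-homogeneous function is 0-homogeneous. -/
lemma fderiv_smul (h : IsMinkowskiNorm N) {x : Euc n} (hx : x ≠ 0) {c : ℝ} (hc : 0 < c) :
    fderiv ℝ N (c • x) = fderiv ℝ N x := by
  have hcx : c • x ≠ 0 := smul_ne_zero (ne_of_gt hc) hx
  have h1 : HasFDerivAt (fun y : Euc n => N (c • y))
      ((fderiv ℝ N (c • x)).comp (c • ContinuousLinearMap.id ℝ (Euc n))) x := by
    have hd : HasFDerivAt (fun y : Euc n => c • y) (c • ContinuousLinearMap.id ℝ (Euc n)) x := by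
      exact (ContinuousLinearMap.id ℝ (Euc n)).hasFDerivAt.const_smul c
    exact ((differentiableAt h hcx).hasFDerivAt).comp x hd
  have h2 : HasFDerivAt (fun y : Euc n => N (c • y)) (c • fderiv ℝ N x) x := by
    have heq : (fun y : Euc n => N (c • y)) = (fun y : Euc n => c * N y) := by
      funext y; rw [homog h, abs_of_pos hc]
    rw [heq]
    simpa [Pi.smul_def] using ((differentiableAt h hx).hasFDerivAt).const_smul c
  have := h1.unique h2
  ext w
  have := congrArg (fun (L : Euc n →L[ℝ] ℝ) => L w) this
  simp only [ContinuousLinearMap.comp_apply, ContinuousLinearMap.smul_apply,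
    ContinuousLinearMap.id_apply, smul_eq_mul] at this ⊢
  have hc0 : c ≠ 0 := ne_of_gt hc
  field_simp at this
  have h3 : (fderiv ℝ N (c • x)) (c • w) = c * (fderiv ℝ N (c • x)) w := by
    rw [map_smul, smul_eq_mul]
  exact mul_left_cancel₀ hc0 (by linarith)

lemma gradient_smul (h : IsMinkowskiNorm N) {x : Euc n} (hx : x ≠ 0) {c : ℝ} (hc : 0 < c) :
    gradient N (c • x) = gradient N x := by
  unfold gradient
  rw [fderiv_smul h hx hc]

/-- Every point of the unit sphere gives a lower bound for the dual norm... and sup is attained. -/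
lemma exists_maximizer (h : IsMinkowskiNorm N) (hn : 1 ≤ n) (z : Euc n) :
    ∃ ξ : Euc n, N ξ = 1 ∧ ⟪z, ξ⟫ = dualNorm N z ∧ ∀ η, N η = 1 → ⟪z, η⟫ ≤ ⟪z, ξ⟫ := by
  have hcpt := sphere_isCompact h hn
  have hne := sphere_nonempty h hn
  have hcont : ContinuousOn (fun ξ : Euc n => ⟪z, ξ⟫) {ξ : Euc n | N ξ = 1} :=
    (continuous_const.inner continuous_id).continuousOn
  obtain ⟨ξ, hξS, hmax⟩ := hcpt.exists_isMaxOn hne hcont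
  refine ⟨ξ, hξS, ?_, fun η hη => hmax hη⟩
  unfold dualNorm
  apply le_antisymm
  · exact le_csSup ((hcpt.image_of_continuousOn hcont).bddAbove) ⟨ξ, hξS, rfl⟩
  · apply csSup_le (hne.image _)
    rintro _ ⟨η, hη, rfl⟩
    exact hmax hη

lemma le_dualNorm (h : IsMinkowskiNorm N) (hn : 1 ≤ n) (z : Euc n) {ξ : Euc n}
    (hξ : N ξ = 1) : ⟪z, ξ⟫ ≤ dualNorm N z := by
  obtain ⟨ξ', _, he, hmax⟩ := exists_maximizer h hn z
  exact le_trans (hmax _ hξ) (le_of_eq he)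

lemma dualNorm_pos (h : IsMinkowskiNorm N) (hn : 1 ≤ n) {z : Euc n} (hz : z ≠ 0) :
    0 < dualNorm N z := by
  have hNz := pos h hz
  have hmem : N ((N z)⁻¹ • z) = 1 := by
    rw [homog h, abs_of_pos (inv_pos.2 hNz), inv_mul_cancel₀ (ne_of_gt hNz)]
  have hle := le_dualNorm h hn z hmem
  have hip : ⟪z, (N z)⁻¹ • z⟫ = (N z)⁻¹ * ‖z‖^2 := by
    rw [real_inner_smul_right, real_inner_self_eq_norm_sq]
  rw [hip] at hle
  have : 0 < (N z)⁻¹ * ‖z‖^2 := by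
    apply mul_pos (inv_pos.2 hNz)
    have : 0 < ‖z‖ := norm_pos_iff.2 hz
    positivity
  linarith

/-- Uniqueness of the maximizer. -/
lemma maximizer_unique (h : IsMinkowskiNorm N) (hn : 1 ≤ n) {z : Euc n} (hz : z ≠ 0)
    {ξ₁ ξ₂ : Euc n} (h₁ : N ξ₁ = 1) (h₂ : N ξ₂ = 1)
    (e₁ : ⟪z, ξ₁⟫ = dualNorm N z) (e₂ : ⟪z, ξ₂⟫ = dualNorm N z) : ξ₁ = ξ₂ := by
  by_contra hne
  have hd := dualNorm_pos h hn hz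
  set w : Euc n := (1/2 : ℝ) • ξ₁ + (1/2 : ℝ) • ξ₂ with hw
  have hsc := h.2.2.2.2 (Set.mem_univ ξ₁) (Set.mem_univ ξ₂) hne
    (by norm_num : (0:ℝ) < 1/2) (by norm_num : (0:ℝ) < 1/2) (by norm_num)
  simp only [smul_eq_mul] at hsc
  have hNw2 : N w ^ 2 < 1 := by
    have h' : N ((1/2 : ℝ) • ξ₁ + (1/2 : ℝ) • ξ₂) ^ 2 < 1/2 * (N ξ₁ ^ 2) + 1/2 * (N ξ₂ ^ 2) := hsc
    rw [h₁, h₂, ← hw] at h'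
    norm_num at h'
    nlinarith [le_abs_self (N w), abs_nonneg (N w)]
  have hiw : ⟪z, w⟫ = dualNorm N z := by
    rw [hw, inner_add_right, real_inner_smul_right, real_inner_smul_right, e₁, e₂]
    ring
  have hw0 : w ≠ 0 := by
    intro h0
    rw [h0, inner_zero_right] at hiw
    linarith
  have hNw : 0 < N w := pos h hw0
  have hNwlt : N w < 1 := by nlinarith [pos h hw0]
  have hmem : N ((N w)⁻¹ • w) = 1 := by
    rw [homog h, abs_of_pos (inv_pos.2 hNw), inv_mul_cancel₀ (ne_of_gt hNw)]
  have hle := le_dualNorm h hn z hmem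
  rw [real_inner_smul_right, hiw] at hle
  have : dualNorm N z < (N w)⁻¹ * dualNorm N z := by
    have h1 : 1 < (N w)⁻¹ := (one_lt_inv₀ hNw).2 hNwlt
    nlinarith
  linarith

lemma sphere_norm_le (h : IsMinkowskiNorm N) (hn : 1 ≤ n) :
    ∃ R : ℝ, 0 < R ∧ ∀ η : Euc n, N η = 1 → ‖η‖ ≤ R := by
  obtain ⟨c, hc, hcb⟩ := exists_lower h hn
  refine ⟨c⁻¹, inv_pos.2 hc, fun η hη => ?_⟩
  have := hcb η
  rw [hη] at this
  rw [← le_div_iff₀' hc] at this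
  simpa [one_div] using this

/-- Quantitative continuity of the maximizer. -/
lemma maximizer_close (h : IsMinkowskiNorm N) (hn : 1 ≤ n) {z : Euc n} (hz : z ≠ 0)
    {ξ : Euc n} (hξ1 : N ξ = 1) (hξe : ⟪z, ξ⟫ = dualNorm N z) :
    ∀ ε : ℝ, 0 < ε → ∃ δ : ℝ, 0 < δ ∧ ∀ z' : Euc n, ‖z' - z‖ < δ → ∀ η, N η = 1 →
      ⟪z', η⟫ = dualNorm N z' → ‖η - ξ‖ < ε := by
  intro ε hε
  obtain ⟨R, hR, hRb⟩ := sphere_norm_le h hn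
  set K : Set (Euc n) := {η | N η = 1} ∩ {η | ε ≤ ‖η - ξ‖} with hK
  rcases Set.eq_empty_or_nonempty K with hKe | hKne
  · refine ⟨1, one_pos, fun z' _ η hη _ => ?_⟩
    by_contra hcon
    push_neg at hcon
    exact Set.eq_empty_iff_forall_notMem.1 hKe η ⟨hη, hcon⟩
  · have hKcpt : IsCompact K :=
      (sphere_isCompact h hn).inter_right
        (isClosed_le continuous_const (continuous_id.sub continuous_const).norm)
    have hcont : ContinuousOn (fun η : Euc n => ⟪z, η⟫) K :=
      (continuous_const.inner continuous_id).continuousOn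
    obtain ⟨η₀, hη₀K, hmax⟩ := hKcpt.exists_isMaxOn hKne hcont
    set d := dualNorm N z with hd
    set M := ⟪z, η₀⟫ with hM
    have hMlt : M < d := by
      rcases lt_or_eq_of_le (le_dualNorm h hn z hη₀K.1) with hlt | heqM
      · exact hlt
      · exfalso
        have := maximizer_unique h hn hz hξ1 hη₀K.1 hξe heqM
        have hd0 : ‖η₀ - ξ‖ = 0 := by rw [← this]; simp
        have := hη₀K.2
        rw [Set.mem_setOf_eq, hd0] at this
        linarith
    refine ⟨(d - M) / (2 * R), div_pos (by linarith) (by linarith), fun z' hz' η hη hηe => ?_⟩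
    by_contra hcon
    push_neg at hcon
    have hηK : η ∈ K := ⟨hη, hcon⟩
    -- lower bound for dualNorm N z'
    have hlow : d - ‖z' - z‖ * R ≤ dualNorm N z' := by
      have h1 : ⟪z', ξ⟫ ≤ dualNorm N z' := le_dualNorm h hn z' hξ1
      have h2 : ⟪z', ξ⟫ = ⟪z, ξ⟫ + ⟪z' - z, ξ⟫ := by
        rw [← inner_add_left]; norm_num
      have h3 : |⟪z' - z, ξ⟫| ≤ ‖z' - z‖ * ‖ξ‖ := abs_real_inner_le_norm _ _
      have h4 : ‖ξ‖ ≤ R := hRb ξ hξ1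
      have h5 : -(‖z' - z‖ * R) ≤ ⟪z' - z, ξ⟫ := by
        have := neg_abs_le (⟪z' - z, ξ⟫)
        nlinarith [norm_nonneg (z' - z)]
      rw [h2, hξe] at h1
      linarith
    -- upper bound
    have hupp : dualNorm N z' ≤ M + ‖z' - z‖ * R := by
      have h2 : ⟪z', η⟫ = ⟪z, η⟫ + ⟪z' - z, η⟫ := by
        rw [← inner_add_left]; norm_num
      have h3 : |⟪z' - z, η⟫| ≤ ‖z' - z‖ * ‖η‖ := abs_real_inner_le_norm _ _
      have h4 : ‖η‖ ≤ R := hRb η hη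
      have h5 : ⟪z' - z, η⟫ ≤ ‖z' - z‖ * R := by
        have := le_abs_self (⟪z' - z, η⟫)
        nlinarith [norm_nonneg (z' - z)]
      have h6 : ⟪z, η⟫ ≤ M := hmax hηK
      rw [← hηe, h2]
      linarith
    have : d - M ≤ 2 * (‖z' - z‖ * R) := by linarith
    have hlt : ‖z' - z‖ * R < ((d - M) / (2 * R)) * R := by
      exact mul_lt_mul_of_pos_right hz' hR
    rw [div_mul_eq_mul_div, mul_comm (2:ℝ) R, ← div_div, mul_div_assoc] at hlt
    rw [div_self (ne_of_gt hR), mul_one] at hlt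
    linarith

/-- The dual norm is differentiable at z ≠ 0 with gradient the maximizer. -/
lemma dualNorm_hasGradientAt (h : IsMinkowskiNorm N) (hn : 1 ≤ n) {z : Euc n} (hz : z ≠ 0)
    {ξ : Euc n} (hξ1 : N ξ = 1) (hξe : ⟪z, ξ⟫ = dualNorm N z) :
    HasGradientAt (dualNorm N) ξ z := by
  rw [hasGradientAt_iff_isLittleO, Asymptotics.isLittleO_iff]
  intro c hc
  obtain ⟨δ, hδ, hδb⟩ := maximizer_close h hn hz hξ1 hξe c hc
  filter_upwards [Metric.ball_mem_nhds z hδ] with z' hz'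
  rw [Metric.mem_ball, dist_eq_norm] at hz'
  obtain ⟨η, hη1, hηe, _⟩ := exists_maximizer h hn z'
  have hclose : ‖η - ξ‖ < c := hδb z' hz' η hη1 hηe
  set E := dualNorm N z' - dualNorm N z - ⟪ξ, z' - z⟫ with hE
  have hElow : 0 ≤ E := by
    have h1 : ⟪z', ξ⟫ ≤ dualNorm N z' := le_dualNorm h hn z' hξ1
    have h2 : ⟪z', ξ⟫ = ⟪z, ξ⟫ + ⟪z' - z, ξ⟫ := by
      rw [← inner_add_left]; norm_num
    rw [h2, hξe] at h1
    rw [hE, real_inner_comm]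
    linarith
  have hEupp : E ≤ c * ‖z' - z‖ := by
    have h2 : ⟪z', η⟫ = ⟪z, η⟫ + ⟪z' - z, η⟫ := by
      rw [← inner_add_left]; norm_num
    have h3 : ⟪z, η⟫ ≤ dualNorm N z := le_dualNorm h hn z hη1
    have h4 : ⟪z' - z, η - ξ⟫ ≤ ‖z' - z‖ * ‖η - ξ‖ := real_inner_le_norm _ _
    have h5 : ⟪z' - z, η - ξ⟫ = ⟪z' - z, η⟫ - ⟪z' - z, ξ⟫ := inner_sub_right _ _ _
    have h6 : ‖z' - z‖ * ‖η - ξ‖ ≤ ‖z' - z‖ * c := by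
      exact mul_le_mul_of_nonneg_left (le_of_lt hclose) (norm_nonneg _)
    have h7 : (⟪ξ, z' - z⟫ : ℝ) = ⟪z' - z, ξ⟫ := real_inner_comm _ _
    rw [hE, ← hηe, h7, h2]
    nlinarith
  rw [Real.norm_eq_abs, abs_of_nonneg hElow]
  exact hEupp

/-- Lagrange multipliers: the gradient of N at the maximizer is `d⁻¹ • z`. -/
lemma gradient_at_maximizer (h : IsMinkowskiNorm N) (hn : 1 ≤ n) {z : Euc n} (hz : z ≠ 0)
    {ξ : Euc n} (hξ1 : N ξ = 1) (hξe : ⟪z, ξ⟫ = dualNorm N z)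
    (hmax : ∀ η, N η = 1 → ⟪z, η⟫ ≤ ⟪z, ξ⟫) :
    gradient N ξ = (dualNorm N z)⁻¹ • z := by
  have hξ0 : ξ ≠ 0 := by
    intro h0; rw [h0, zero h] at hξ1; norm_num at hξ1
  have hd : 0 < dualNorm N z := dualNorm_pos h hn hz
  set d := dualNorm N z with hdd
  have hNd : HasStrictFDerivAt N (fderiv ℝ N ξ) ξ := hasStrictFDerivAt h hξ0
  set φ' : Euc n →L[ℝ] ℝ := InnerProductSpace.toDual ℝ (Euc n) z with hφ'
  have hφd : HasStrictFDerivAt (fun η : Euc n => ⟪z, η⟫) φ' ξ := by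
    have := φ'.hasStrictFDerivAt (x := ξ)
    convert this using 2
    simp [hφ', InnerProductSpace.toDual_apply_apply]
  have hextr : IsLocalExtrOn (fun η : Euc n => ⟪z, η⟫) {x : Euc n | N x = N ξ} ξ := by
    apply IsExtrOn.localize
    apply IsMaxOn.isExtr
    intro η hη
    simp only [Set.mem_setOf_eq, hξ1] at hη
    exact hmax η hη
  obtain ⟨a, b, hab, heq⟩ := hextr.exists_multipliers_of_hasStrictFDerivAt_1d hNd hφd
  have heval : ∀ w : Euc n, a * fderiv ℝ N ξ w + b * ⟪z, w⟫ = 0 := by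
    intro w
    have := congrArg (fun L : Euc n →L[ℝ] ℝ => L w) heq
    simp only [hφ', ContinuousLinearMap.add_apply, ContinuousLinearMap.coe_smul',
      Pi.smul_apply, smul_eq_mul, ContinuousLinearMap.zero_apply,
      InnerProductSpace.toDual_apply_apply] at this
    exact this
  have hξeval : a * 1 + b * d = 0 := by
    have := heval ξ
    rwa [euler h hξ0, hξ1, hξe] at this
  have hb : b ≠ 0 := by
    intro hb0
    rw [hb0] at hξeval
    simp at hξeval
    exact hab (by simp [hξeval, hb0, Prod.ext_iff])
  have ha : a = -b * d := by linarith
  have ha0 : a ≠ 0 := by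
    rw [ha]
    exact mul_ne_zero (neg_ne_zero.2 hb) (ne_of_gt hd)
  have hfd : fderiv ℝ N ξ = d⁻¹ • φ' := by
    ext w
    have h1 := heval w
    have h2 : (d⁻¹ • φ') w = d⁻¹ * ⟪z, w⟫ := by
      simp [hφ', InnerProductSpace.toDual_apply_apply]
    rw [h2]
    rw [ha] at h1
    have hd0 : d ≠ 0 := ne_of_gt hd
    have h4 : b * ((⟪z, w⟫ : ℝ) - d * (fderiv ℝ N ξ) w) = 0 := by linear_combination h1
    have h5 : (⟪z, w⟫ : ℝ) - d * (fderiv ℝ N ξ) w = 0 := (mul_eq_zero.1 h4).resolve_left hb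
    have h6 : (⟪z, w⟫ : ℝ) = d * (fderiv ℝ N ξ) w := by linarith
    rw [h6]
    field_simp
  unfold gradient
  rw [hfd, hφ']
  simp

end MN

/-- The scalar coefficient function appearing in the radial vector field. -/
def hfun (β C t : ℝ) : ℝ := t ^ (β - 2) * (t ^ β + C) ^ (1/β - 1)

section Main
variable {m k : ℕ}

lemma field_eq (α : ℝ) (hα : 0 < α) {Φ : Euc m → ℝ} (Ψ : Euc k → ℝ)
    (hΦ : IsMinkowskiNorm Φ) (hm : 1 ≤ m) (σ : Euc k) {z : Euc m} (hz : z ≠ 0) :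
    Φ (gradZ (rho α Φ Ψ) (z, σ)) • gradient Φ (gradZ (rho α Φ Ψ) (z, σ))
      = hfun (2*(α+1)) (4*(α+1)^2 * dualNorm Ψ σ ^ 2) (dualNorm Φ z) • z := by
  obtain ⟨ξ, hξ1, hξe, hmax⟩ := MN.exists_maximizer hΦ hm z
  have hgradF : HasGradientAt (dualNorm Φ) ξ z := MN.dualNorm_hasGradientAt hΦ hm hz hξ1 hξe
  have hΦgrad : gradient Φ ξ = (dualNorm Φ z)⁻¹ • z :=
    MN.gradient_at_maximizer hΦ hm hz hξ1 hξe hmax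
  have hξ0 : ξ ≠ 0 := by
    intro h0; rw [h0, MN.zero hΦ] at hξ1; norm_num at hξ1
  have hF : 0 < dualNorm Φ z := MN.dualNorm_pos hΦ hm hz
  set β : ℝ := 2*(α+1) with hβdef
  set C : ℝ := 4*(α+1)^2 * dualNorm Ψ σ ^ 2 with hCdef
  set F : Euc m → ℝ := dualNorm Φ with hFdef
  have hβ0 : 0 < β := by rw [hβdef]; linarith
  have hC : 0 ≤ C := by rw [hCdef]; positivity
  have hA : 0 < F z ^ β + C := add_pos_of_pos_of_nonneg (Real.rpow_pos_of_pos hF β) hC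
  set c' : ℝ := 1/β * (F z ^ β + C) ^ (1/β - 1) * (β * F z ^ (β - 1)) with hc'def
  have hc' : 0 < c' := by
    rw [hc'def]
    have h1 := Real.rpow_pos_of_pos hA (1/β - 1)
    have h2 := Real.rpow_pos_of_pos hF (β - 1)
    positivity
  -- derivative of the scalar function t ↦ (t^β + C)^(1/β)
  have hg1 : HasDerivAt (fun t : ℝ => t ^ β + C) (β * F z ^ (β - 1)) (F z) :=
    (Real.hasDerivAt_rpow_const (Or.inl (ne_of_gt hF))).add_const C
  have hg2 : HasDerivAt (fun u : ℝ => u ^ (1/β))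
      (1/β * (F z ^ β + C) ^ (1/β - 1)) (F z ^ β + C) :=
    Real.hasDerivAt_rpow_const (Or.inl (ne_of_gt hA))
  have hg : HasDerivAt (fun t : ℝ => (t ^ β + C) ^ (1/β)) c' (F z) := by
    have := hg2.comp (F z) hg1
    simpa [Function.comp_def, hc'def] using this
  -- gradient of z' ↦ rho (z', σ)
  have hcomp : HasFDerivAt (fun z' : Euc m => (F z' ^ β + C) ^ (1/β))
      (c' • (InnerProductSpace.toDual ℝ (Euc m) ξ)) z := by
    have := hg.comp_hasFDerivAt z hgradF.hasFDerivAt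
    simpa [Function.comp_def] using this
  have hgrho : HasGradientAt (fun z' : Euc m => (F z' ^ β + C) ^ (1/β)) (c' • ξ) z := by
    rw [hasFDerivAt_iff_hasGradientAt] at hcomp
    convert hcomp using 1
    simp
  have hrho : (fun z' : Euc m => rho α Φ Ψ (z', σ)) =
      (fun z' : Euc m => (F z' ^ β + C) ^ (1/β)) := rfl
  have hgz : gradZ (rho α Φ Ψ) (z, σ) = c' • ξ := by
    show gradient (fun z' : Euc m => rho α Φ Ψ (z', (z, σ).2)) (z, σ).1 = c' • ξ
    rw [show ((z, σ).2 : Euc k) = σ from rfl, show ((z, σ).1 : Euc m) = z from rfl, hrho]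
    exact hgrho.gradient
  rw [hgz]
  have hΦc : Φ (c' • ξ) = c' := by
    rw [MN.homog hΦ, abs_of_pos hc', hξ1, mul_one]
  have hgc : gradient Φ (c' • ξ) = (F z)⁻¹ • z := by
    rw [MN.gradient_smul hΦ hξ0 hc', hΦgrad]
  rw [hΦc, hgc, smul_smul]
  congr 1
  have hFne : F z ≠ 0 := ne_of_gt hF
  have hβne : β ≠ 0 := ne_of_gt hβ0
  have e2 : F z ^ (β - 1) * (F z)⁻¹ = F z ^ (β - 2) := by
    have h' := Real.rpow_add hF (β - 1) (-1)
    rw [show (β:ℝ) - 1 + -1 = β - 2 by ring] at h'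
    rw [h', Real.rpow_neg_one]
  show c' * (F z)⁻¹ = hfun β C (F z)
  unfold hfun
  calc c' * (F z)⁻¹
      = (F z ^ (β - 1) * (F z)⁻¹) * (F z ^ β + C) ^ (1/β - 1) * (1/β * β) := by
        rw [hc'def]; ring
    _ = F z ^ (β - 2) * (F z ^ β + C) ^ (1/β - 1) * 1 := by
        rw [e2, one_div, inv_mul_cancel₀ hβne]
    _ = F z ^ (β - 2) * (F z ^ β + C) ^ (1/β - 1) := by rw [mul_one]
/-- `Δ_Φ(ρ) = (m+2α) Φ⁰(z)^{2α} ρ^{-2α-1} − (2α+1) Φ⁰(z)^{4α+2} ρ^{-4α-3}` for `z ≠ 0`. -/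
theorem finsler_laplacian_z_of_rho (m k : ℕ) (hm : 1 ≤ m) (hk : 1 ≤ k) (α : ℝ) (hα : 0 < α)
    (Φ : Euc m → ℝ) (Ψ : Euc k → ℝ) (hΦ : IsMinkowskiNorm Φ) (hΨ : IsMinkowskiNorm Ψ) :
    ∀ x : Euc m × Euc k, x ≠ 0 → x.1 ≠ 0 →
      finslerLapZ Φ (rho α Φ Ψ) x =
        ((m : ℝ) + 2 * α) * dualNorm Φ x.1 ^ (2 * α) * rho α Φ Ψ x ^ (-(2 * α) - 1)
        - (2 * α + 1) * dualNorm Φ x.1 ^ (4 * α + 2) * rho α Φ Ψ x ^ (-(4 * α) - 3) := by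
  intro x hx hx1
  obtain ⟨ξ, hξ1, hξe, hmax⟩ := MN.exists_maximizer hΦ hm x.1
  have hgradF : HasGradientAt (dualNorm Φ) ξ x.1 := MN.dualNorm_hasGradientAt hΦ hm hx1 hξ1 hξe
  have hF : 0 < dualNorm Φ x.1 := MN.dualNorm_pos hΦ hm hx1
  have hα1 : α + 1 ≠ 0 := by linarith
  set β : ℝ := 2*(α+1) with hβdef
  set C : ℝ := 4*(α+1)^2 * dualNorm Ψ x.2 ^ 2 with hCdef
  set F : Euc m → ℝ := dualNorm Φ with hFdef
  set F₀ : ℝ := F x.1 with hF₀def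
  have hβ0 : 0 < β := by rw [hβdef]; linarith
  have hβne : β ≠ 0 := ne_of_gt hβ0
  have hFne : F₀ ≠ 0 := ne_of_gt hF
  have hC : 0 ≤ C := by rw [hCdef]; positivity
  have hA : 0 < F₀ ^ β + C := add_pos_of_pos_of_nonneg (Real.rpow_pos_of_pos hF β) hC
  set A : ℝ := F₀ ^ β + C with hAdef
  have hAne : A ≠ 0 := ne_of_gt hA
  -- derivative of hfun β C at F₀
  set D : ℝ := (β-2) * F₀ ^ (β-3) * A ^ (1/β-1) + (1-β) * F₀ ^ (2*β-3) * A ^ (1/β-2) with hDdef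
  have h1 : HasDerivAt (fun t : ℝ => t ^ (β-2)) ((β-2) * F₀ ^ (β-2-1)) F₀ :=
    Real.hasDerivAt_rpow_const (Or.inl hFne)
  have h2i : HasDerivAt (fun t : ℝ => t ^ β + C) (β * F₀ ^ (β-1)) F₀ :=
    (Real.hasDerivAt_rpow_const (Or.inl hFne)).add_const C
  have h2o : HasDerivAt (fun u : ℝ => u ^ (1/β-1)) ((1/β-1) * A ^ (1/β-1-1)) A :=
    Real.hasDerivAt_rpow_const (Or.inl hAne)
  have h2 : HasDerivAt (fun t : ℝ => (t ^ β + C) ^ (1/β-1))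
      ((1/β-1) * A ^ (1/β-1-1) * (β * F₀ ^ (β-1))) F₀ := by
    have := h2o.comp F₀ h2i
    simpa [Function.comp_def] using this
  have hq : F₀ ^ (β-2) * F₀ ^ (β-1) = F₀ ^ (2*β-3) := by
    rw [← Real.rpow_add hF]; congr 1; ring
  have hββ : (1/β-1)*β = 1-β := by field_simp
  have hd : HasDerivAt (hfun β C) D F₀ := by
    have hmul := h1.mul h2
    have heta : ((fun t : ℝ => t ^ (β-2)) * fun t : ℝ => (t ^ β + C) ^ (1/β-1)) = hfun β C := rfl
    rw [heta] at hmul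
    refine hmul.congr_deriv (Eq.symm ?_)
    rw [← hAdef]
    rw [hDdef, show (β:ℝ)-2-1 = β-3 by ring, show (1:ℝ)/β-1-1 = 1/β-2 by ring]
    congr 1
    rw [show F₀ ^ (β-2) * ((1/β-1) * A^(1/β-2) * (β * F₀^(β-1)))
        = ((1/β-1)*β) * (F₀^(β-2) * F₀^(β-1)) * A^(1/β-2) from by ring, hββ, hq]
  -- the pointwise vector field identity, eventually, coordinatewise
  have hVe : ∀ i : Fin m,
      fderiv ℝ (fun z => (Φ (gradZ (rho α Φ Ψ) (z, x.2)) •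
          gradient Φ (gradZ (rho α Φ Ψ) (z, x.2))) i) x.1
      = fderiv ℝ (fun z => hfun β C (F z) * z i) x.1 := by
    intro i
    apply Filter.EventuallyEq.fderiv_eq
    filter_upwards [isOpen_compl_singleton.mem_nhds hx1] with z hz
    have hz0 : z ≠ 0 := hz
    rw [field_eq α hα Ψ hΦ hm x.2 hz0]
    rfl
  -- derivative of the radial vector field coordinates
  have hsc : HasFDerivAt (fun z : Euc m => hfun β C (F z))
      (D • (InnerProductSpace.toDual ℝ (Euc m) ξ)) x.1 := by
    have := hd.comp_hasFDerivAt x.1 hgradF.hasFDerivAt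
    simpa [Function.comp_def] using this
  have hfdAt : ∀ i : Fin m, HasFDerivAt (fun z : Euc m => hfun β C (F z) * z i)
      ((hfun β C F₀) • (EuclideanSpace.proj i : Euc m →L[ℝ] ℝ)
        + (x.1 i) • (D • (InnerProductSpace.toDual ℝ (Euc m) ξ))) x.1 := by
    intro i
    have hproj : HasFDerivAt (fun z : Euc m => z i)
        (EuclideanSpace.proj i : Euc m →L[ℝ] ℝ) x.1 :=
      (EuclideanSpace.proj i : Euc m →L[ℝ] ℝ).hasFDerivAt
    exact hsc.mul hproj
  have key : ∀ i : Fin m,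
      fderiv ℝ (fun z => (Φ (gradZ (rho α Φ Ψ) (z, x.2)) •
          gradient Φ (gradZ (rho α Φ Ψ) (z, x.2))) i) x.1 (EuclideanSpace.single i 1)
      = hfun β C F₀ + x.1 i * (D * ξ i) := by
    intro i
    rw [hVe i, (hfdAt i).fderiv]
    simp only [ContinuousLinearMap.add_apply, ContinuousLinearMap.coe_smul', Pi.smul_apply,
      smul_eq_mul, InnerProductSpace.toDual_apply_apply, PiLp.proj_apply,
      EuclideanSpace.single_apply, if_pos rfl]
    rw [EuclideanSpace.inner_single_right]
    simp
  have hsum : finslerLapZ Φ (rho α Φ Ψ) x = ∑ i : Fin m, (hfun β C F₀ + x.1 i * (D * ξ i)) := by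
    unfold finslerLapZ divZ
    exact Finset.sum_congr rfl fun i _ => key i
  have hsum2 : ∑ i : Fin m, (hfun β C F₀ + x.1 i * (D * ξ i)) = m * hfun β C F₀ + D * F₀ := by
    rw [Finset.sum_add_distrib, Finset.sum_const, Finset.card_univ, Fintype.card_fin,
      nsmul_eq_mul]
    congr 1
    have hsw : ∑ i : Fin m, x.1 i * (D * ξ i) = D * ∑ i : Fin m, ξ i * x.1 i := by
      rw [Finset.mul_sum]; exact Finset.sum_congr rfl fun i _ => by ring
    rw [hsw]
    congr 1
  rw [hsum, hsum2]
  -- now the algebra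
  have hrho : rho α Φ Ψ x = A ^ (1/β) := rfl
  have er1 : rho α Φ Ψ x ^ (-(2*α) - 1) = A ^ (1/β-1) := by
    rw [hrho, ← Real.rpow_mul hA.le]
    congr 1
    rw [hβdef]; field_simp; ring
  have er2 : rho α Φ Ψ x ^ (-(4*α) - 3) = A ^ (1/β-2) := by
    rw [hrho, ← Real.rpow_mul hA.le]
    congr 1
    rw [hβdef]; field_simp; ring
  rw [er1, er2]
  have eq1 : F₀ ^ (β-3) * F₀ = F₀ ^ (β-2) := by
    rw [show (β:ℝ)-2 = (β-3)+1 by ring, Real.rpow_add_one hFne]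
  have eq2 : F₀ ^ (2*β-3) * F₀ = F₀ ^ (2*β-2) := by
    rw [show (2:ℝ)*β-2 = (2*β-3)+1 by ring, Real.rpow_add_one hFne]
  have step : (m : ℝ) * hfun β C F₀ + D * F₀
      = ((m:ℝ) + (β-2)) * F₀ ^ (β-2) * A^(1/β-1) + (1-β) * F₀^(2*β-2) * A^(1/β-2) := by
    unfold hfun
    rw [← hAdef, hDdef]
    rw [show ((β-2) * F₀ ^ (β-3) * A ^ (1/β-1) + (1-β) * F₀ ^ (2*β-3) * A ^ (1/β-2)) * F₀
        = (β-2) * (F₀ ^ (β-3) * F₀) * A ^ (1/β-1) + (1-β) * (F₀ ^ (2*β-3) * F₀) * A ^ (1/β-2)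
        from by ring]
    rw [eq1, eq2]
    ring
  rw [step]
  rw [show (β:ℝ)-2 = 2*α from by rw [hβdef]; ring,
    show (2:ℝ)*β-2 = 4*α+2 from by rw [hβdef]; ring,
    show (1:ℝ)-β = -(2*α+1) from by rw [hβdef]; ring]
  ring
end Main
end
end

section
/- For every (z,σ) ∈ ℝ^N ∖ {(0,0)} with σ ≠ 0, the Finsler Laplacian in the σ-variables of ρ satisfies Δ_Ψ(ρ)(z,σ) = 4(α+1)·k·ρ(z,σ)^{-2α-1} − (2α+1)(4(α+1))² Ψ⁰(σ)² ρ(z,σ)^{-4α-3}. -/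
open Real MeasureTheory
open scoped RealInnerProductSpace

noncomputable section

variable {m k : ℕ}

namespace MkAux

variable {n : ℕ} {N : Euc n → ℝ}

lemma zero_eq (hN : IsMinkowskiNorm N) : N 0 = 0 := by
  have := hN.2.1 0 0
  simpa using this

lemma pos (hN : IsMinkowskiNorm N) {x : Euc n} (hx : x ≠ 0) : 0 < N x := by
  have h2 : ((0:Euc n) ≠ (2:ℝ) • x) := by
    intro h
    rcases smul_eq_zero.mp h.symm with h' | h'
    · norm_num at h'
    · exact hx h'
  have hs := hN.2.2.2.2 (Set.mem_univ (0:Euc n)) (Set.mem_univ ((2:ℝ) • x)) h2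
    (by norm_num : (0:ℝ) < 1/2) (by norm_num : (0:ℝ) < 1/2) (by norm_num)
  have hx2 : (1/2 : ℝ) • (0:Euc n) + (1/2 : ℝ) • ((2:ℝ) • x) = x := by
    rw [smul_zero, zero_add, smul_smul]; norm_num
  simp only [hx2, smul_eq_mul] at hs
  have hz : N (0:Euc n) = 0 := zero_eq hN
  have h2x : N ((2:ℝ) • x) = 2 * N x := by
    rw [hN.2.1 2 x, abs_of_pos]; norm_num
  rw [hz, h2x] at hs
  have h0 : 0 < N x ^ 2 := by nlinarith
  rcases (hN.1 x).lt_or_eq with h | h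
  · exact h
  · exfalso; rw [← h] at h0; simp at h0

lemma hom_pos (hN : IsMinkowskiNorm N) {c : ℝ} (hc : 0 ≤ c) (x : Euc n) :
    N (c • x) = c * N x := by
  rw [hN.2.1, abs_of_nonneg hc]

lemma continuous_sq (hN : IsMinkowskiNorm N) : Continuous (fun x => (N x)^2) := by
  have h := hN.2.2.2.convexOn.continuousOn isOpen_univ
  exact continuousOn_univ.mp h

lemma continuous (hN : IsMinkowskiNorm N) : Continuous N := by
  have : N = fun x => Real.sqrt ((N x)^2) := by
    funext x; rw [Real.sqrt_sq (hN.1 x)]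
  rw [this]
  exact Real.continuous_sqrt.comp (continuous_sq hN)



/-- The unit set of `N`. -/
def K (N : Euc n → ℝ) : Set (Euc n) := {ξ | N ξ = 1}

lemma K_nonempty (hN : IsMinkowskiNorm N) {v : Euc n} (hv : v ≠ 0) :
    (K N).Nonempty := by
  refine ⟨(N v)⁻¹ • v, ?_⟩
  have hp := pos hN hv
  simp only [K, Set.mem_setOf_eq]
  rw [hom_pos hN (by positivity)]
  field_simp

lemma lower_bound (hN : IsMinkowskiNorm N) :
    ∃ c > 0, ∀ ξ ∈ K N, ‖ξ‖ ≤ c := by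
  -- on K, N ξ = 1; use compactness of the euclidean sphere to bound N from below
  by_cases hn : ∃ v : Euc n, v ≠ 0
  · obtain ⟨v, hv⟩ := hn
    have hsph : IsCompact (Metric.sphere (0 : Euc n) 1) := isCompact_sphere 0 1
    have hne : (Metric.sphere (0 : Euc n) 1).Nonempty := by
      refine ⟨‖v‖⁻¹ • v, ?_⟩
      have hnv : (0:ℝ) < ‖v‖ := norm_pos_iff.mpr hv
      simp [norm_smul, abs_of_pos (inv_pos.mpr hnv)]
      field_simp
    obtain ⟨w, hw, hwmin⟩ := hsph.exists_isMinOn hne ((continuous hN).continuousOn)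
    have hw0 : w ≠ 0 := by
      intro h; rw [Metric.mem_sphere, h] at hw; simp at hw
    have hc : 0 < N w := pos hN hw0
    refine ⟨(N w)⁻¹, inv_pos.mpr hc, ?_⟩
    intro ξ hξ
    have hξ0 : ξ ≠ 0 := by
      intro h; rw [h] at hξ; simp only [K, Set.mem_setOf_eq, zero_eq hN] at hξ; norm_num at hξ
    have hξn : (0:ℝ) < ‖ξ‖ := norm_pos_iff.mpr hξ0
    have hmem : ‖ξ‖⁻¹ • ξ ∈ Metric.sphere (0 : Euc n) 1 := by
      simp [norm_smul, abs_of_pos (inv_pos.mpr hξn)]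
      field_simp
    have := hwmin hmem
    simp only [Set.mem_setOf_eq] at this
    have h1 : N w ≤ ‖ξ‖⁻¹ * N ξ := by
      rw [← hom_pos hN (by positivity : (0:ℝ) ≤ ‖ξ‖⁻¹)]
      exact this
    have hNξ : N ξ = 1 := hξ
    rw [hNξ, mul_one] at h1
    rw [le_inv_comm₀ hc hξn] at h1
    exact h1
  · push_neg at hn
    refine ⟨1, one_pos, ?_⟩
    intro ξ hξ
    rw [hn ξ]; simp

lemma K_compact (hN : IsMinkowskiNorm N) : IsCompact (K N) := by
  obtain ⟨c, hc, hb⟩ := lower_bound hN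
  have hclosed : IsClosed (K N) := isClosed_eq (continuous hN) continuous_const
  have hbdd : Bornology.IsBounded (K N) := by
    apply Metric.isBounded_iff_subset_closedBall (0 : Euc n) |>.mpr
    exact ⟨c, fun ξ hξ => by simpa [Metric.mem_closedBall] using hb ξ hξ⟩
  exact Metric.isCompact_of_isClosed_isBounded hclosed hbdd

lemma exists_max (hN : IsMinkowskiNorm N) {v : Euc n} (hv : v ≠ 0) (y : Euc n) :
    ∃ ξ, ξ ∈ K N ∧ IsMaxOn (fun ξ' => ⟪y, ξ'⟫) (K N) ξ := by
  have hcont : Continuous (fun ξ' : Euc n => (⟪y, ξ'⟫ : ℝ)) :=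
    continuous_const.inner continuous_id
  obtain ⟨ξ, hξ, hmax⟩ := (K_compact hN).exists_isMaxOn (K_nonempty hN hv)
    hcont.continuousOn
  exact ⟨ξ, hξ, hmax⟩

lemma bddAbove_inner (hN : IsMinkowskiNorm N) (y : Euc n) :
    BddAbove ((fun ξ => ⟪y, ξ⟫) '' K N) := by
  have hcont : Continuous (fun ξ' : Euc n => (⟪y, ξ'⟫ : ℝ)) :=
    continuous_const.inner continuous_id
  exact ((K_compact hN).image hcont).bddAbove

lemma dualNorm_eq_inner (hN : IsMinkowskiNorm N) {v : Euc n} (hv : v ≠ 0) (y : Euc n)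
    {ξ : Euc n} (hξ : ξ ∈ K N) (hmax : IsMaxOn (fun ξ' => ⟪y, ξ'⟫) (K N) ξ) :
    dualNorm N y = ⟪y, ξ⟫ := by
  apply IsGreatest.csSup_eq
  constructor
  · exact ⟨ξ, hξ, rfl⟩
  · rintro r ⟨ξ', hξ', rfl⟩
    exact hmax hξ'

lemma dualNorm_pos (hN : IsMinkowskiNorm N) {x : Euc n} (hx : x ≠ 0) :
    0 < dualNorm N x := by
  obtain ⟨ξ, hξ, hmax⟩ := exists_max hN hx x
  rw [dualNorm_eq_inner hN hx x hξ hmax]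
  have hNx : 0 < N x := pos hN hx
  have h0 : ((N x)⁻¹ • x) ∈ K N := by
    simp only [K, Set.mem_setOf_eq]
    rw [hom_pos hN (inv_nonneg.mpr hNx.le)]
    field_simp
  calc (0:ℝ) < ⟪x, (N x)⁻¹ • x⟫ := by
        rw [real_inner_smul_right, real_inner_self_eq_norm_sq]
        have hxn : (0:ℝ) < ‖x‖ := norm_pos_iff.mpr hx
        exact mul_pos (inv_pos.mpr hNx) (pow_pos hxn 2)
    _ ≤ ⟪x, ξ⟫ := hmax h0

lemma maximizer_ne (hN : IsMinkowskiNorm N) {x : Euc n} (hx : x ≠ 0)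
    {ξ : Euc n} (hξ : ξ ∈ K N) (hmax : IsMaxOn (fun ξ' => ⟪x, ξ'⟫) (K N) ξ) :
    ⟪x, ξ⟫ = dualNorm N x := (dualNorm_eq_inner hN hx x hξ hmax).symm

/-- uniqueness of the maximizer -/
lemma maximizer_unique (hN : IsMinkowskiNorm N) {x : Euc n} (hx : x ≠ 0)
    {ξ₁ ξ₂ : Euc n} (h₁ : ξ₁ ∈ K N) (hmax₁ : IsMaxOn (fun ξ' => ⟪x, ξ'⟫) (K N) ξ₁)
    (h₂ : ξ₂ ∈ K N) (hmax₂ : IsMaxOn (fun ξ' => ⟪x, ξ'⟫) (K N) ξ₂) : ξ₁ = ξ₂ := by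
  by_contra hne
  set M := dualNorm N x with hM
  have hMpos : 0 < M := dualNorm_pos hN hx
  have e₁ : ⟪x, ξ₁⟫ = M := maximizer_ne hN hx h₁ hmax₁
  have e₂ : ⟪x, ξ₂⟫ = M := maximizer_ne hN hx h₂ hmax₂
  -- midpoint
  set w : Euc n := (1/2 : ℝ) • ξ₁ + (1/2 : ℝ) • ξ₂ with hw
  have hNw : (N w)^2 < 1 := by
    have h2 := hN.2.2.2.2 (Set.mem_univ ξ₁) (Set.mem_univ ξ₂) hne
      (by norm_num : (0:ℝ) < 1/2) (by norm_num : (0:ℝ) < 1/2) (by norm_num)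
    simp only [smul_eq_mul] at h2
    have hK1 : N ξ₁ = 1 := h₁
    have hK2 : N ξ₂ = 1 := h₂
    rw [hK1, hK2] at h2
    rw [hw]
    have h3 : (1/2:ℝ) * 1 ^ 2 + (1/2:ℝ) * 1 ^ 2 = 1 := by norm_num
    linarith [h2]
  have hinner : ⟪x, w⟫ = M := by
    rw [hw, inner_add_right, real_inner_smul_right, real_inner_smul_right, e₁, e₂]
    ring
  have hw0 : w ≠ 0 := by
    intro h
    rw [h, inner_zero_right] at hinner
    exact hMpos.ne hinner
  have hNwpos : 0 < N w := pos hN hw0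
  have hNwlt : N w < 1 := by nlinarith
  set ξ' : Euc n := (N w)⁻¹ • w with hξ'
  have hξ'K : ξ' ∈ K N := by
    simp only [K, Set.mem_setOf_eq, hξ']
    rw [hom_pos hN (inv_nonneg.mpr hNwpos.le)]
    field_simp
  have : ⟪x, ξ'⟫ ≤ M := by
    rw [hM]
    exact le_csSup (bddAbove_inner hN x) ⟨ξ', hξ'K, rfl⟩
  rw [hξ', real_inner_smul_right, hinner] at this
  have hgt : M < (N w)⁻¹ * M := by
    have h1 : 1 < (N w)⁻¹ := (one_lt_inv₀ hNwpos).mpr hNwlt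
    nlinarith
  linarith

lemma argmax_stable (hN : IsMinkowskiNorm N) {x : Euc n} (hx : x ≠ 0)
    {ξ : Euc n} (hξ : ξ ∈ K N) (hmax : IsMaxOn (fun ξ' => ⟪x, ξ'⟫) (K N) ξ)
    {ε : ℝ} (hε : 0 < ε) :
    ∃ δ > 0, ∀ y : Euc n, ‖y - x‖ < δ → ∀ ξ', ξ' ∈ K N →
      IsMaxOn (fun ξ'' => ⟪y, ξ''⟫) (K N) ξ' → ‖ξ' - ξ‖ < ε := by
  obtain ⟨R, hR, hRb⟩ := lower_bound hN
  set M := dualNorm N x with hM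
  set Kε : Set (Euc n) := K N ∩ {η | ε ≤ dist η ξ} with hKε
  have hKεclosed : IsClosed Kε :=
    (isClosed_eq (continuous hN) continuous_const).inter
      (isClosed_le continuous_const (continuous_id.dist continuous_const))
  have hKεcompact : IsCompact Kε := (K_compact hN).inter_right
    (isClosed_le continuous_const (continuous_id.dist continuous_const))
  by_cases hne : Kε.Nonempty
  · have hcont : Continuous (fun ξ' : Euc n => (⟪x, ξ'⟫ : ℝ)) :=
      continuous_const.inner continuous_id
    obtain ⟨η, hη, hηmax⟩ := hKεcompact.exists_isMaxOn hne hcont.continuousOn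
    set M' := ⟪x, η⟫ with hM'
    have hM'lt : M' < M := by
      rcases lt_or_eq_of_le (le_csSup (bddAbove_inner hN x) ⟨η, hη.1, rfl⟩ : M' ≤ M)
        with h | h
      · exact h
      · exfalso
        have hηmaxK : IsMaxOn (fun ξ' => ⟪x, ξ'⟫) (K N) η := by
          intro ζ hζ
          simp only [Set.mem_setOf_eq]
          calc ⟪x, ζ⟫ ≤ M := le_csSup (bddAbove_inner hN x) ⟨ζ, hζ, rfl⟩
            _ = M' := h.symm
        have := maximizer_unique hN hx hη.1 hηmaxK hξ hmax
        have hd : ε ≤ dist η ξ := hη.2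
        rw [this] at hd
        simp at hd
        linarith
    refine ⟨(M - M') / (2 * R + 1), div_pos (by linarith) (by linarith), ?_⟩
    intro y hy ξ' hξ'K hmax'
    by_contra hcon
    push_neg at hcon
    have hξ'Kε : ξ' ∈ Kε := ⟨hξ'K, by simpa [dist_eq_norm] using hcon⟩
    -- chain of inequalities
    have hbξ : ‖ξ‖ ≤ R := hRb ξ hξ
    have hbξ' : ‖ξ'‖ ≤ R := hRb ξ' hξ'K
    have h1 : ⟪y, ξ⟫ ≤ ⟪y, ξ'⟫ := hmax' hξ
    have h2 : ⟪x, ξ'⟫ ≤ M' := hηmax hξ'Kε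
    have h3 : ⟪x, ξ⟫ = M := maximizer_ne hN hx hξ hmax
    have hyx1 : |⟪y - x, ξ⟫| ≤ ‖y - x‖ * R :=
      le_trans (abs_real_inner_le_norm _ _)
        (mul_le_mul_of_nonneg_left hbξ (norm_nonneg _))
    have hyx2 : |⟪y - x, ξ'⟫| ≤ ‖y - x‖ * R :=
      le_trans (abs_real_inner_le_norm _ _)
        (mul_le_mul_of_nonneg_left hbξ' (norm_nonneg _))
    have hsplit : ⟪y, ξ⟫ = ⟪x, ξ⟫ + ⟪y - x, ξ⟫ := by
      rw [inner_sub_left]; ring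
    have hsplit' : ⟪y, ξ'⟫ = ⟪x, ξ'⟫ + ⟪y - x, ξ'⟫ := by
      rw [inner_sub_left]; ring
    have habs1 := abs_le.mp hyx1
    have habs2 := abs_le.mp hyx2
    have hkey : M - M' ≤ 2 * (‖y - x‖ * R) := by
      nlinarith [h1, h2, h3, hsplit, hsplit', habs1.1, habs2.2]
    have hysmall : ‖y - x‖ < (M - M') / (2 * R + 1) := hy
    have : 2 * (‖y - x‖ * R) < M - M' := by
      have hMM' : 0 < M - M' := by linarith
      have hnn : 0 ≤ ‖y - x‖ := norm_nonneg _
      have h4 : ‖y - x‖ * (2 * R + 1) < M - M' :=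
        (lt_div_iff₀ (by linarith : (0:ℝ) < 2 * R + 1)).mp hysmall
      have h5 : ‖y - x‖ * (2 * R + 1) = 2 * (‖y - x‖ * R) + ‖y - x‖ := by ring
      linarith
    linarith
  · refine ⟨1, one_pos, ?_⟩
    intro y hy ξ' hξ'K hmax'
    by_contra hcon
    push_neg at hcon
    exact hne ⟨ξ', hξ'K, by simpa [dist_eq_norm] using hcon⟩

lemma hasGradientAt_dualNorm (hN : IsMinkowskiNorm N) {x : Euc n} (hx : x ≠ 0)
    {ξ : Euc n} (hξ : ξ ∈ K N) (hmax : IsMaxOn (fun ξ' => ⟪x, ξ'⟫) (K N) ξ) :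
    HasGradientAt (dualNorm N) ξ x := by
  rw [hasGradientAt_iff_isLittleO, Asymptotics.isLittleO_iff]
  intro c hc
  obtain ⟨δ, hδ, hstab⟩ := argmax_stable hN hx hξ hmax hc
  rw [Metric.eventually_nhds_iff]
  refine ⟨δ, hδ, ?_⟩
  intro y hy
  rw [dist_eq_norm] at hy
  obtain ⟨ξy, hξyK, hmaxy⟩ := exists_max hN hx y
  have ey : dualNorm N y = ⟪y, ξy⟫ := by
    apply IsGreatest.csSup_eq
    exact ⟨⟨ξy, hξyK, rfl⟩, by rintro r ⟨ζ, hζ, rfl⟩; exact hmaxy hζ⟩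
  have ex : dualNorm N x = ⟪x, ξ⟫ := dualNorm_eq_inner hN hx x hξ hmax
  have hstb : ‖ξy - ξ‖ < c := hstab y hy ξy hξyK hmaxy
  set Δ : ℝ := dualNorm N y - dualNorm N x - ⟪ξ, y - x⟫ with hΔ
  have hΔeq : Δ = ⟪y, ξy⟫ - ⟪y, ξ⟫ := by
    rw [hΔ, ey, ex, inner_sub_right, real_inner_comm ξ y, real_inner_comm ξ x]
    ring
  have hlow : 0 ≤ Δ := by
    rw [hΔeq]
    have := hmaxy hξ
    simp only [Set.mem_setOf_eq] at this
    linarith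
  have hupp : Δ ≤ c * ‖y - x‖ := by
    have hsp : Δ = ⟪x, ξy - ξ⟫ + ⟪y - x, ξy - ξ⟫ := by
      rw [hΔeq, inner_sub_right, inner_sub_right, inner_sub_left, inner_sub_left]
      ring
    have h1 : ⟪x, ξy - ξ⟫ ≤ 0 := by
      rw [inner_sub_right]
      have := hmax hξyK
      simp only [Set.mem_setOf_eq] at this
      linarith
    have h2 : ⟪y - x, ξy - ξ⟫ ≤ ‖y - x‖ * ‖ξy - ξ‖ :=
      real_inner_le_norm _ _
    have h3 : ‖y - x‖ * ‖ξy - ξ‖ ≤ ‖y - x‖ * c :=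
      mul_le_mul_of_nonneg_left hstb.le (norm_nonneg _)
    rw [hsp]
    nlinarith [norm_nonneg (y - x)]
  have : ‖Δ‖ ≤ c * ‖y - x‖ := by
    rw [Real.norm_eq_abs, abs_le]
    constructor
    · have : 0 ≤ c * ‖y - x‖ := by positivity
      linarith
    · exact hupp
  simpa using this

lemma contDiffAt_N (hN : IsMinkowskiNorm N) {ξ : Euc n} (hξ : ξ ≠ 0) :
    ContDiffAt ℝ 2 N ξ := by
  have hsq : ContDiffAt ℝ 2 (fun x => (N x)^2) ξ :=
    hN.2.2.1.contDiffAt ((isOpen_compl_singleton).mem_nhds hξ)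
  have hpos : (0:ℝ) < (N ξ)^2 := pow_pos (pos hN hξ) 2
  have : ContDiffAt ℝ 2 (fun x => Real.sqrt ((N x)^2)) ξ :=
    (Real.contDiffAt_sqrt hpos.ne').comp ξ hsq
  convert this using 1
  funext x
  rw [Real.sqrt_sq (hN.1 x)]

lemma differentiableAt_N (hN : IsMinkowskiNorm N) {ξ : Euc n} (hξ : ξ ≠ 0) :
    DifferentiableAt ℝ N ξ :=
  (contDiffAt_N hN hξ).differentiableAt (by norm_num)

lemma hasGradientAt_N (hN : IsMinkowskiNorm N) {ξ : Euc n} (hξ : ξ ≠ 0) :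
    HasGradientAt N (gradient N ξ) ξ :=
  (differentiableAt_N hN hξ).hasGradientAt

lemma euler_N (hN : IsMinkowskiNorm N) {ξ : Euc n} (hξ : ξ ≠ 0) :
    ⟪gradient N ξ, ξ⟫ = N ξ := by
  have hgrad := hasGradientAt_N hN hξ
  have hfd := hasGradientAt_iff_hasFDerivAt.mp hgrad
  -- t ↦ N (t • ξ) has derivative ⟪∇N ξ, ξ⟫ at 1
  have hline : HasDerivAt (fun t : ℝ => t • ξ) ξ 1 := by
    simpa using (hasDerivAt_id (1:ℝ)).smul_const ξ
  have hcomp : HasDerivAt (fun t : ℝ => N (t • ξ))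
      ((InnerProductSpace.toDual ℝ (Euc n) (gradient N ξ)) ξ) 1 := by
    have hfd' : HasFDerivAt N (InnerProductSpace.toDual ℝ (Euc n) (gradient N ξ))
        ((1:ℝ) • ξ) := by simpa using hfd
    have := hfd'.comp_hasDerivAt (x := (1:ℝ)) hline
    exact this
  have hval : ((InnerProductSpace.toDual ℝ (Euc n) (gradient N ξ)) ξ) = ⟪gradient N ξ, ξ⟫ :=
    InnerProductSpace.toDual_apply_apply
  -- also equals t * N ξ near 1
  have heq : (fun t : ℝ => N (t • ξ)) =ᶠ[nhds (1:ℝ)] (fun t : ℝ => t * N ξ) := by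
    filter_upwards [Ioi_mem_nhds (by norm_num : (0:ℝ) < 1)] with t ht
    rw [hom_pos hN (le_of_lt ht)]
  have hcomp' : HasDerivAt (fun t : ℝ => t * N ξ) ((InnerProductSpace.toDual ℝ (Euc n)
      (gradient N ξ)) ξ) 1 := hcomp.congr_of_eventuallyEq heq.symm
  have hlin : HasDerivAt (fun t : ℝ => t * N ξ) (N ξ) 1 := by
    simpa using (hasDerivAt_id (1:ℝ)).mul_const (N ξ)
  have := hcomp'.unique hlin
  rw [← hval, this]

lemma grad_hom (hN : IsMinkowskiNorm N) {c : ℝ} (hc : 0 < c) {ξ : Euc n} (hξ : ξ ≠ 0) :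
    gradient N (c • ξ) = gradient N ξ := by
  have hcξ : c • ξ ≠ 0 := smul_ne_zero hc.ne' hξ
  have hg1 := hasGradientAt_iff_hasFDerivAt.mp (hasGradientAt_N hN hcξ)
  have hg2 := hasGradientAt_iff_hasFDerivAt.mp (hasGradientAt_N hN hξ)
  -- chain rule for scaling
  have hsmul : HasFDerivAt (fun y : Euc n => c • y) (c • (ContinuousLinearMap.id ℝ (Euc n))) ξ := by
    exact (hasFDerivAt_id ξ).const_smul c
  have hchain : HasFDerivAt (fun y : Euc n => N (c • y))
      ((InnerProductSpace.toDual ℝ (Euc n) (gradient N (c • ξ))).comp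
        (c • (ContinuousLinearMap.id ℝ (Euc n)))) ξ := hg1.comp ξ hsmul
  have heq : (fun y : Euc n => N (c • y)) = (fun y : Euc n => c * N y) := by
    funext y; rw [hom_pos hN hc.le]
  rw [heq] at hchain
  have hlin : HasFDerivAt (fun y : Euc n => c * N y)
      (c • (InnerProductSpace.toDual ℝ (Euc n) (gradient N ξ))) ξ := by
    simpa using hg2.const_mul c
  have huniq := hchain.unique hlin
  apply ext_inner_left ℝ
  intro v
  have hv := congrFun (congrArg DFunLike.coe huniq) v
  simp only [ContinuousLinearMap.coe_comp', Function.comp_apply,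
    ContinuousLinearMap.smul_apply, ContinuousLinearMap.coe_id', id_eq,
    InnerProductSpace.toDual_apply_apply, smul_eq_mul] at hv
  have hv' : c * ⟪gradient N (c • ξ), v⟫ = c * ⟪gradient N ξ, v⟫ := by
    rw [← real_inner_smul_right, hv]
  have := mul_left_cancel₀ hc.ne' hv'
  calc ⟪v, gradient N (c • ξ)⟫ = ⟪gradient N (c • ξ), v⟫ := real_inner_comm _ _
    _ = ⟪gradient N ξ, v⟫ := this
    _ = ⟪v, gradient N ξ⟫ := real_inner_comm _ _

lemma grad_at_maximizer (hN : IsMinkowskiNorm N) {x : Euc n} (hx : x ≠ 0)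
    {ξ : Euc n} (hξ : ξ ∈ K N) (hmax : IsMaxOn (fun ξ' => ⟪x, ξ'⟫) (K N) ξ) :
    gradient N ξ = (dualNorm N x)⁻¹ • x := by
  have hξ0 : ξ ≠ 0 := by
    intro h; rw [h] at hξ
    simp only [K, Set.mem_setOf_eq, zero_eq hN] at hξ; norm_num at hξ
  have hN1 : N ξ = 1 := hξ
  -- Lagrange multipliers
  have hstrict : HasStrictFDerivAt N (fderiv ℝ N ξ) ξ :=
    (contDiffAt_N hN hξ0).hasStrictFDerivAt (by norm_num)
  have hφstrict : HasStrictFDerivAt (fun ξ' : Euc n => ⟪x, ξ'⟫)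
      (innerSL ℝ x : Euc n →L[ℝ] ℝ) ξ :=
    (innerSL ℝ x).hasStrictFDerivAt
  have hset : {ξ' : Euc n | N ξ' = N ξ} = K N := by
    simp only [hN1, K]
  have hextr : IsLocalExtrOn (fun ξ' : Euc n => ⟪x, ξ'⟫) {ξ' | N ξ' = N ξ} ξ := by
    rw [IsLocalExtrOn, hset]
    exact Or.inr (hmax.filter_mono inf_le_right)
  obtain ⟨a, b, hab, heq0⟩ :=
    hextr.exists_multipliers_of_hasStrictFDerivAt_1d hstrict hφstrict
  set g : Euc n := gradient N ξ with hg
  have hfderiv : fderiv ℝ N ξ = InnerProductSpace.toDual ℝ (Euc n) g :=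
    (hasGradientAt_iff_hasFDerivAt.mp (hasGradientAt_N hN hξ0)).fderiv
  have hvv : ∀ v : Euc n, a * ⟪g, v⟫ + b * ⟪x, v⟫ = 0 := by
    intro v
    have := congrFun (congrArg DFunLike.coe heq0) v
    simp only [ContinuousLinearMap.add_apply, ContinuousLinearMap.smul_apply,
      ContinuousLinearMap.zero_apply, smul_eq_mul, hfderiv,
      InnerProductSpace.toDual_apply_apply, innerSL_apply_apply] at this
    exact this
  have ha : a ≠ 0 := by
    intro ha0
    rw [ha0] at hvv hab
    have hb : b ≠ 0 := by
      intro hb0; rw [hb0] at hab; exact hab rfl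
    have := hvv x
    simp only [zero_mul, zero_add] at this
    have hxx : ⟪x, x⟫ = (0:ℝ) := by
      rcases mul_eq_zero.mp this with h | h
      · exact absurd h hb
      · exact h
    rw [real_inner_self_eq_norm_sq] at hxx
    have : ‖x‖ = 0 := by nlinarith [norm_nonneg x]
    exact hx (norm_eq_zero.mp this)
  have hgx : g = (-(b/a)) • x := by
    apply ext_inner_right ℝ
    intro v
    rw [real_inner_smul_left]
    set A := (⟪g, v⟫ : ℝ) with hA
    set B := (⟪x, v⟫ : ℝ) with hB
    have h0 : a * A + b * B = 0 := hvv v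
    field_simp
    linarith
  have heuler : ⟪g, ξ⟫ = 1 := by rw [hg, euler_N hN hξ0, hN1]
  have hD : ⟪x, ξ⟫ = dualNorm N x := maximizer_ne hN hx hξ hmax
  have hDpos : 0 < dualNorm N x := dualNorm_pos hN hx
  have hcoef : -(b/a) * dualNorm N x = 1 := by
    rw [← hD, ← real_inner_smul_left, ← hgx, heuler]
  have hcoef' : -(b/a) = (dualNorm N x)⁻¹ := by
    rw [← one_div]
    exact (eq_div_iff hDpos.ne').mpr hcoef
  rw [hgx, hcoef']

lemma dualNorm_nonneg (hN : IsMinkowskiNorm N) (y : Euc n) : 0 ≤ dualNorm N y := by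
  by_cases hK : (K N).Nonempty
  · obtain ⟨ξ0, hξ0⟩ := hK
    have hneg : -ξ0 ∈ K N := by
      have : N (-ξ0) = 1 := by
        have := hN.2.1 (-1) ξ0
        simpa [hξ0.out] using this
      exact this
    rcases le_or_gt 0 (⟪y, ξ0⟫ : ℝ) with h | h
    · exact le_trans h (le_csSup (bddAbove_inner hN y) ⟨ξ0, hξ0, rfl⟩)
    · have : (0:ℝ) ≤ ⟪y, -ξ0⟫ := by rw [inner_neg_right]; linarith
      exact le_trans this (le_csSup (bddAbove_inner hN y) ⟨-ξ0, hneg, rfl⟩)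
  · have h0 : (K N) = ∅ := Set.not_nonempty_iff_eq_empty.mp hK
    have h2 : ((fun ξ => (⟪y, ξ⟫ : ℝ)) '' {ξ | N ξ = 1}) = ∅ := by
      rw [show {ξ : Euc n | N ξ = 1} = K N from rfl, h0, Set.image_empty]
    rw [dualNorm, h2, Real.sSup_empty]

lemma hasFDerivAt_Spow (hN : IsMinkowskiNorm N) (A B q : ℝ) (hA : 0 ≤ A) (hB : 0 < B)
    {σ' : Euc n} (hσ' : σ' ≠ 0) {ξ' : Euc n} (hξ' : ξ' ∈ K N)
    (hmax : IsMaxOn (fun ζ => ⟪σ', ζ⟫) (K N) ξ') :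
    HasFDerivAt (fun σ'' => (A + B * dualNorm N σ'' ^ 2) ^ q)
      ((q * (A + B * dualNorm N σ' ^ 2) ^ (q - 1) * (2 * B * dualNorm N σ')) •
        (InnerProductSpace.toDual ℝ (Euc n) ξ')) σ' := by
  set t0 := dualNorm N σ' with ht0
  have ht0pos : 0 < t0 := dualNorm_pos hN hσ'
  have hS0 : 0 < A + B * t0 ^ 2 := by
    have := mul_pos hB (pow_pos ht0pos 2); linarith
  have hFD : HasFDerivAt (dualNorm N) (InnerProductSpace.toDual ℝ (Euc n) ξ') σ' :=
    hasGradientAt_iff_hasFDerivAt.mp (hasGradientAt_dualNorm hN hσ' hξ' hmax)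
  have hsq : HasDerivAt (fun t : ℝ => A + B * t ^ 2) (B * (2 * t0 ^ 1)) t0 := by
    have := (hasDerivAt_pow 2 t0).const_mul B
    have h2 := this.const_add A
    simpa using h2
  have hS : HasFDerivAt (fun σ'' => A + B * dualNorm N σ'' ^ 2)
      ((B * (2 * t0 ^ 1)) • InnerProductSpace.toDual ℝ (Euc n) ξ') σ' :=
    by have h := HasDerivAt.comp_hasFDerivAt σ' hsq hFD; exact h
  have hpow : HasDerivAt (fun s : ℝ => s ^ q) (q * (A + B * t0 ^ 2) ^ (q - 1))
      (A + B * t0 ^ 2) := Real.hasDerivAt_rpow_const (Or.inl hS0.ne')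
  have h := hpow.comp_hasFDerivAt σ' hS
  rw [smul_smul] at h
  have hsc : q * (A + B * t0 ^ 2) ^ (q - 1) * (B * (2 * t0 ^ 1)) =
      q * (A + B * t0 ^ 2) ^ (q - 1) * (2 * B * t0) := by ring
  rw [hsc] at h
  exact h

end MkAux


open MkAux in
/-- `Δ_Ψ(ρ) = 4(α+1)·k·ρ^{-2α-1} − (2α+1)(4(α+1))² Ψ⁰(σ)² ρ^{-4α-3}` for `σ ≠ 0`. -/
theorem finsler_laplacian_s_of_rho (m k : ℕ) (hm : 1 ≤ m) (hk : 1 ≤ k) (α : ℝ) (hα : 0 < α)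
    (Φ : Euc m → ℝ) (Ψ : Euc k → ℝ) (hΦ : IsMinkowskiNorm Φ) (hΨ : IsMinkowskiNorm Ψ) :
    ∀ x : Euc m × Euc k, x ≠ 0 → x.2 ≠ 0 →
      finslerLapS Ψ (rho α Φ Ψ) x =
        4 * (α + 1) * (k : ℝ) * rho α Φ Ψ x ^ (-(2 * α) - 1)
        - (2 * α + 1) * (4 * (α + 1)) ^ 2 * dualNorm Ψ x.2 ^ 2 *
            rho α Φ Ψ x ^ (-(4 * α) - 3) := by
  intro x hx hσ
  have hα1 : (0:ℝ) < α + 1 := by linarith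
  have hα1ne : (α + 1) ≠ 0 := hα1.ne'
  set A := dualNorm Φ x.1 ^ (2 * (α + 1)) with hA_def
  set B := 4 * (α + 1) ^ 2 with hB_def
  set r := 1 / (2 * (α + 1)) with hr_def
  have hAnn : 0 ≤ A := by
    rw [hA_def]; exact Real.rpow_nonneg (dualNorm_nonneg hΦ x.1) _
  have hBpos : (0:ℝ) < B := by rw [hB_def]; positivity
  have hrpos : 0 < r := by rw [hr_def]; positivity
  have hSpos : ∀ σ' : Euc k, σ' ≠ 0 → 0 < A + B * dualNorm Ψ σ' ^ 2 := by
    intro σ' h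
    have := mul_pos hBpos (pow_pos (dualNorm_pos hΨ h) 2)
    linarith
  -- pointwise identity for the vector field
  have key : ∀ σ' : Euc k, σ' ≠ 0 →
      Ψ (gradS (rho α Φ Ψ) (x.1, σ')) • gradient Ψ (gradS (rho α Φ Ψ) (x.1, σ')) =
        (4 * (α + 1) * (A + B * dualNorm Ψ σ' ^ 2) ^ (r - 1)) • σ' := by
    intro σ' hσ'
    obtain ⟨ξ', hξ'K, hmax'⟩ := exists_max hΨ hσ' σ'
    have hT'pos : 0 < dualNorm Ψ σ' := dualNorm_pos hΨ hσ'
    have hS' : 0 < A + B * dualNorm Ψ σ' ^ 2 := hSpos σ' hσ'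
    have hfd := hasFDerivAt_Spow hΨ A B r hAnn hBpos hσ' hξ'K hmax'
    set c := r * (A + B * dualNorm Ψ σ' ^ 2) ^ (r - 1) * (2 * B * dualNorm Ψ σ') with hc_def
    have hXpos : (0:ℝ) < (A + B * dualNorm Ψ σ' ^ 2) ^ (r - 1) :=
      Real.rpow_pos_of_pos hS' _
    have hcpos : 0 < c := by
      rw [hc_def]
      exact mul_pos (mul_pos hrpos hXpos)
        (mul_pos (mul_pos two_pos hBpos) hT'pos)
    have hgrad : gradS (rho α Φ Ψ) (x.1, σ') = c • ξ' := by
      have hg : HasGradientAt (fun σ'' => rho α Φ Ψ (x.1, σ'')) (c • ξ') σ' := by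
        rw [hasGradientAt_iff_hasFDerivAt, _root_.map_smul]
        exact hfd
      exact hg.gradient
    rw [hgrad]
    have hξ'0 : ξ' ≠ 0 := by
      intro h
      rw [h] at hξ'K
      have h1 : Ψ (0 : Euc k) = 1 := hξ'K
      rw [zero_eq hΨ] at h1
      norm_num at h1
    have hΨval : Ψ (c • ξ') = c := by
      rw [hom_pos hΨ hcpos.le, show Ψ ξ' = 1 from hξ'K, mul_one]
    have hgradΨ : gradient Ψ (c • ξ') = (dualNorm Ψ σ')⁻¹ • σ' := by
      rw [grad_hom hΨ hcpos hξ'0, grad_at_maximizer hΨ hσ' hξ'K hmax']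
    rw [hΨval, hgradΨ, smul_smul]
    congr 1
    rw [hc_def, hr_def, hB_def]
    field_simp
  -- replace the vector field by its simplified form inside the divergence
  have hlap : finslerLapS Ψ (rho α Φ Ψ) x =
      ∑ i, fderiv ℝ
        (fun σ' : Euc k => 4 * (α + 1) * (A + B * dualNorm Ψ σ' ^ 2) ^ (r - 1) * σ' i)
        x.2 (EuclideanSpace.single i 1) := by
    rw [finslerLapS, divS]
    refine Finset.sum_congr rfl fun i _ => ?_
    have heq : (fun σ' : Euc k =>
        (Ψ (gradS (rho α Φ Ψ) (x.1, σ')) • gradient Ψ (gradS (rho α Φ Ψ) (x.1, σ'))) i)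
        =ᶠ[nhds x.2]
        (fun σ' : Euc k => 4 * (α + 1) * (A + B * dualNorm Ψ σ' ^ 2) ^ (r - 1) * σ' i) := by
      filter_upwards [compl_singleton_mem_nhds hσ] with σ' hσ'
      have hσ'0 : σ' ≠ 0 := hσ'
      have hk' := key σ' hσ'0
      have := congrArg (fun v : Euc k => v i) hk'
      simpa [PiLp.smul_apply, smul_eq_mul] using this
    rw [heq.fderiv_eq]
  rw [hlap]
  -- compute the derivative at x.2
  obtain ⟨ξ, hξK, hmax⟩ := exists_max hΨ hσ x.2
  set T := dualNorm Ψ x.2 with hT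
  have hTpos : 0 < T := dualNorm_pos hΨ hσ
  have hS0 : 0 < A + B * T ^ 2 := hSpos x.2 hσ
  have hfdG := hasFDerivAt_Spow hΨ A B (r - 1) hAnn hBpos hσ hξK hmax
  set cG := (r - 1) * (A + B * T ^ 2) ^ (r - 1 - 1) * (2 * B * T) with hcG_def
  have hG := hfdG.const_mul (4 * (α + 1))
  have hdT : T = ⟪x.2, ξ⟫ := dualNorm_eq_inner hΨ hσ x.2 hξK hmax
  have hterm : ∀ i : Fin k,
      fderiv ℝ
        (fun σ' : Euc k => 4 * (α + 1) * (A + B * dualNorm Ψ σ' ^ 2) ^ (r - 1) * σ' i)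
        x.2 (EuclideanSpace.single i 1) =
      4 * (α + 1) * (A + B * T ^ 2) ^ (r - 1) +
        4 * (α + 1) * cG * (x.2 i * ξ i) := by
    intro i
    have hproj : HasFDerivAt (fun σ' : Euc k => σ' i)
        (EuclideanSpace.proj (𝕜 := ℝ) i) x.2 :=
      (EuclideanSpace.proj (𝕜 := ℝ) i).hasFDerivAt
    have hm : HasFDerivAt
        (fun σ' : Euc k => 4 * (α + 1) * (A + B * dualNorm Ψ σ' ^ 2) ^ (r - 1) * σ' i) _ x.2 :=
      hG.mul hproj
    rw [hm.fderiv]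
    have hinner : (⟪ξ, EuclideanSpace.single i (1:ℝ)⟫ : ℝ) = ξ i := by
      rw [EuclideanSpace.inner_single_right]
      simp
    have hproj1 : (EuclideanSpace.proj (𝕜 := ℝ) i) (EuclideanSpace.single i (1:ℝ)) = 1 := by
      simp
    simp only [ContinuousLinearMap.add_apply, ContinuousLinearMap.smul_apply,
      InnerProductSpace.toDual_apply_apply, smul_eq_mul, hproj1, hinner]
    ring
  rw [Finset.sum_congr rfl (fun i _ => hterm i)]
  rw [Finset.sum_add_distrib, Finset.sum_const, Finset.card_univ, Fintype.card_fin,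
    ← Finset.mul_sum]
  have hsum : ∑ i : Fin k, x.2 i * ξ i = T := by
    rw [hdT]
    rw [PiLp.inner_apply]
    simp [RCLike.inner_apply]
    exact Finset.sum_congr rfl fun i _ => mul_comm _ _
  rw [hsum]
  -- rewrite the right-hand side
  have hρ : rho α Φ Ψ x = (A + B * T ^ 2) ^ r := by
    rw [rho, hA_def, hB_def, hr_def, hT]
  rw [hρ]
  rw [← Real.rpow_mul hS0.le, ← Real.rpow_mul hS0.le]
  have he1 : r * (-(2 * α) - 1) = r - 1 := by
    rw [hr_def]; field_simp; ring
  have he2 : r * (-(4 * α) - 3) = r - 1 - 1 := by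
    rw [hr_def]; field_simp; ring
  rw [he1, he2]
  rw [hcG_def, hr_def, hB_def]
  have hk0 : (0:ℝ) ≤ (k : ℝ) := Nat.cast_nonneg k
  push_cast
  field_simp
  ring
end
end
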